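/- arXiv:1412.2571 — 4 statements merged into one kernel-verified Lean document; each statement's English description precedes it below -/
import Mathlib

section
/- Let p be a prime and N ≥ 1 an integer. Then P_N^* = {x ∈ ℚ_p : x ≠ 0 and ∃y ∈ ℚ_p, y^N = x} is a subgroup of the multiplicative group ℚ_p^× of finite index. -/
lemma pow_of_close (p N : ℕ) [Fact p.Prime] (w : ℤ_[p])
    (h : ‖w - 1‖ < ‖(N : ℤ_[p])‖ ^ 2) : ∃ z : ℤ_[p], z ^ N = w := by
  obtain ⟨z, hz, -⟩ := hensels_lemma (p := p) (F := Polynomial.X ^ N - Polynomial.C w) (a := 1)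
    (by simpa [Polynomial.derivative_X_pow, norm_sub_rev] using h)
  exact ⟨z, by simpa [sub_eq_zero] using hz⟩

lemma not_dvd_val_unit (p m : ℕ) [Fact p.Prime] (hm : 1 ≤ m) (c : (ZMod (p ^ m))ˣ) :
    ¬ p ∣ ZMod.val (c : ZMod (p ^ m)) := by
  intro hdvd
  have hp := Fact.out (p := p.Prime)
  have h1 : p ∣ Nat.gcd (ZMod.val (c : ZMod (p ^ m))) (p ^ m) :=
    Nat.dvd_gcd hdvd (dvd_pow_self p (by omega))
  rw [ZMod.val_coe_unit_coprime c] at h1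
  exact hp.one_lt.not_ge (Nat.le_of_dvd one_pos h1)

/-- For a prime `p` and an integer `N ≥ 1`, the set
`P_N^* = {x ∈ ℚ_p : x ≠ 0 ∧ ∃ y, y ^ N = x}` of nonzero `N`-th powers is (the underlying
set of) a subgroup of the multiplicative group `ℚ_p^×` of finite index. -/
theorem pow_subgroup_finiteIndex (p : ℕ) [Fact p.Prime] (N : ℕ) (hN : 1 ≤ N) :
    ∃ G : Subgroup ℚ_[p]ˣ,
      (G : Set ℚ_[p]ˣ) = {x : ℚ_[p]ˣ | ∃ y : ℚ_[p], y ^ N = (x : ℚ_[p])} ∧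
      G.FiniteIndex := by
  classical
  have hp := Fact.out (p := p.Prime)
  haveI : NeZero N := ⟨by omega⟩
  set G : Subgroup ℚ_[p]ˣ := (powMonoidHom N : ℚ_[p]ˣ →* ℚ_[p]ˣ).range with hG
  have hmemG : ∀ x : ℚ_[p]ˣ, x ∈ G ↔ ∃ y : ℚ_[p], y ^ N = (x : ℚ_[p]) := by
    intro x
    constructor
    · rintro ⟨y, rfl⟩
      exact ⟨y, by push_cast [powMonoidHom_apply]; rfl⟩
    · rintro ⟨y, hy⟩
      have hy0 : y ≠ 0 := by
        intro h
        rw [h, zero_pow (by omega : N ≠ 0)] at hy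
        exact x.ne_zero hy.symm
      exact ⟨Units.mk0 y hy0, Units.ext (by push_cast [powMonoidHom_apply]; exact hy)⟩
  refine ⟨G, Set.ext fun x => hmemG x, ?_⟩
  -- finite index
  have hpR : (1:ℝ) < p := by exact_mod_cast hp.one_lt
  have hpR0 : (0:ℝ) < p := by linarith
  have hNq0 : ((N : ℚ_[p])) ≠ 0 := by exact_mod_cast (by omega : N ≠ 0)
  have hNpos : (0:ℝ) < ‖(N : ℚ_[p])‖ := norm_pos_iff.mpr hNq0
  have hNn0 : (0:ℝ) < ‖(N : ℚ_[p])‖ ^ 2 := by positivity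
  obtain ⟨k, hk⟩ := exists_pow_lt_of_lt_one hNn0 (inv_lt_one_of_one_lt₀ hpR)
  set m := k + 1 with hmdef
  have hm : ((p:ℝ)⁻¹) ^ m < ‖(N : ℚ_[p])‖ ^ 2 :=
    lt_of_le_of_lt (pow_le_pow_of_le_one (by positivity) (by
      rw [inv_le_one_iff₀]; right; linarith) (Nat.le_succ k)) hk
  haveI : NeZero (p ^ m) := ⟨pow_ne_zero _ hp.pos.ne'⟩
  have hpQ : (p : ℚ_[p]) ≠ 0 := by exact_mod_cast hp.pos.ne'
  have hliftne : ∀ c : (ZMod (p ^ m))ˣ, ((ZMod.val (c : ZMod (p ^ m)) : ℕ) : ℚ_[p]) ≠ 0 := by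
    intro c
    have := not_dvd_val_unit p m (Nat.le_add_left 1 k) c
    have hvne : ZMod.val (c : ZMod (p ^ m)) ≠ 0 := fun h => this (h ▸ dvd_zero p)
    exact_mod_cast hvne
  set rep : ZMod N × (ZMod (p ^ m))ˣ → ℚ_[p]ˣ := fun c =>
    (Units.mk0 (p : ℚ_[p]) hpQ) ^ (c.1.val) * Units.mk0 _ (hliftne c.2) with hrep
  have hsurj : Function.Surjective (fun c => (QuotientGroup.mk (rep c) : ℚ_[p]ˣ ⧸ G)) := by
    intro q
    induction q using QuotientGroup.induction_on with
    | H x =>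
      set xc : ℚ_[p] := (x : ℚ_[p]) with hxc
      have hx0 : xc ≠ 0 := x.ne_zero
      set v : ℤ := xc.valuation with hv
      have hu₀norm : ‖xc * (p : ℚ_[p]) ^ (-v)‖ = 1 := by
        rw [norm_mul, Padic.norm_eq_zpow_neg_valuation hx0, norm_zpow, Padic.norm_p,
          inv_zpow, ← zpow_neg, neg_neg, ← zpow_add₀ (ne_of_gt hpR0)]
        simp [hv]
      set u : ℤ_[p]ˣ := PadicInt.mkUnits hu₀norm with hudef
      have hu : ((u : ℤ_[p]) : ℚ_[p]) = xc * (p : ℚ_[p]) ^ (-v) := rfl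
      set ub : (ZMod (p ^ m))ˣ := Units.map (PadicInt.toZModPow m).toMonoidHom u with hub
      set a : ZMod N := (v : ZMod N) with ha
      set n : ℕ := ZMod.val (ub : ZMod (p ^ m)) with hn
      -- the lift of ub is close to u
      have hker : PadicInt.toZModPow m ((u : ℤ_[p]) - (n : ℤ_[p])) = 0 := by
        rw [map_sub, map_natCast]
        have : PadicInt.toZModPow m (u : ℤ_[p]) = (ub : ZMod (p ^ m)) := rfl
        rw [this, hn, ZMod.natCast_val, ZMod.cast_id, sub_self]
      have hclose : ‖(u : ℤ_[p]) - (n : ℤ_[p])‖ ≤ ((p:ℝ)⁻¹) ^ m := by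
        have hmem : (u : ℤ_[p]) - (n : ℤ_[p]) ∈ Ideal.span {(p : ℤ_[p]) ^ m} := by
          rw [← PadicInt.ker_toZModPow, RingHom.mem_ker]; exact hker
        have := (PadicInt.norm_le_pow_iff_mem_span_pow _ m).mpr hmem
        rwa [zpow_neg, zpow_natCast, ← inv_pow] at this
      -- n is a unit in ℤ_[p]
      have hnnorm : ‖((n : ℕ) : ℤ_[p])‖ = 1 := by
        refine le_antisymm (PadicInt.norm_le_one _) (not_lt.mp ?_)
        intro hlt
        have : ((n : ℤ) : ℤ_[p]) = ((n : ℕ) : ℤ_[p]) := by push_cast; ring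
        rw [← this, PadicInt.norm_int_lt_one_iff_dvd] at hlt
        exact not_dvd_val_unit p m (Nat.le_add_left 1 k) ub (by exact_mod_cast hlt)
      have hnu : IsUnit ((n : ℕ) : ℤ_[p]) := PadicInt.isUnit_iff.mpr hnnorm
      set nu : ℤ_[p]ˣ := hnu.unit with hnudef
      have hnuval : (nu : ℤ_[p]) = ((n : ℕ) : ℤ_[p]) := hnu.unit_spec
      set w : ℤ_[p] := (u : ℤ_[p]) * ((nu⁻¹ : ℤ_[p]ˣ) : ℤ_[p]) with hw
      have hw1 : w - 1 = ((u : ℤ_[p]) - (n : ℤ_[p])) * ((nu⁻¹ : ℤ_[p]ˣ) : ℤ_[p]) := by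
        rw [sub_mul, hw, ← hnuval]
        congr 1
        rw [← Units.val_mul, mul_inv_cancel, Units.val_one]
      have hwnorm : ‖w - 1‖ < ‖(N : ℤ_[p])‖ ^ 2 := by
        rw [hw1, norm_mul, PadicInt.norm_units, mul_one]
        refine lt_of_le_of_lt hclose ?_
        have : ‖(N : ℤ_[p])‖ = ‖(N : ℚ_[p])‖ := by
          rw [← PadicInt.padic_norm_e_of_padicInt]; push_cast; rfl
        rw [this]; exact hm
      obtain ⟨z, hz⟩ := pow_of_close p N w hwnorm
      have hwu : IsUnit w := (Units.isUnit u).mul (Units.isUnit nu⁻¹)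
      have hwne : ((w : ℤ_[p]) : ℚ_[p]) ≠ 0 := by
        intro h
        exact hwu.ne_zero (Subtype.coe_injective (by exact_mod_cast h))
      have hzq : ((z : ℤ_[p]) : ℚ_[p]) ^ N = ((w : ℤ_[p]) : ℚ_[p]) := by
        exact_mod_cast congrArg (fun t : ℤ_[p] => (t : ℚ_[p])) hz
      have hz0 : ((z : ℤ_[p]) : ℚ_[p]) ≠ 0 := by
        intro h
        rw [h, zero_pow (by omega : N ≠ 0)] at hzq
        exact hwne hzq.symm
      have hsub : (((v - (a.val : ℤ)) : ℤ) : ZMod N) = 0 := by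
        push_cast
        rw [ZMod.natCast_val, ZMod.cast_id, ha, sub_self]
      obtain ⟨qz, hq⟩ := (ZMod.intCast_zmod_eq_zero_iff_dvd _ _).mp hsub
      refine ⟨(a, ub), ?_⟩
      rw [QuotientGroup.eq]
      refine (hmemG _).mpr ⟨(p : ℚ_[p]) ^ qz * ((z : ℤ_[p]) : ℚ_[p]), ?_⟩
      have hcoe : (((rep (a, ub))⁻¹ * x : ℚ_[p]ˣ) : ℚ_[p]) =
          ((p : ℚ_[p]) ^ (a.val) * ((n : ℕ) : ℚ_[p]))⁻¹ * xc := by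
        simp only [hrep, Units.val_mul, Units.val_pow_eq_pow_val, Units.val_mk0,
          Units.val_inv_eq_inv_val, hxc]
        rfl
      rw [hcoe]
      have hxcu : xc = ((u : ℤ_[p]) : ℚ_[p]) * (p : ℚ_[p]) ^ v := by
        rw [hu, mul_assoc, ← zpow_add₀ hpQ, neg_add_cancel, zpow_zero, mul_one]
      have hnuinv : ((nu⁻¹ : ℤ_[p]ˣ) : ℚ_[p]) = (((n : ℕ) : ℚ_[p]))⁻¹ := by
        refine eq_inv_of_mul_eq_one_left ?_
        have h1 : ((n : ℕ) : ℤ_[p]) * ((nu⁻¹ : ℤ_[p]ˣ) : ℤ_[p]) = 1 := by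
          rw [← hnuval, ← Units.val_mul, mul_inv_cancel, Units.val_one]
        calc (((nu⁻¹ : ℤ_[p]ˣ) : ℤ_[p]) : ℚ_[p]) * ((n : ℕ) : ℚ_[p])
            = ((((n : ℕ) : ℤ_[p]) * ((nu⁻¹ : ℤ_[p]ˣ) : ℤ_[p]) : ℤ_[p]) : ℚ_[p]) := by
              push_cast; ring
          _ = 1 := by rw [h1]; norm_cast
      have hwq : ((w : ℤ_[p]) : ℚ_[p]) = ((u : ℤ_[p]) : ℚ_[p]) * (((n : ℕ) : ℚ_[p]))⁻¹ := by
        rw [hw]; push_cast; rw [hnuinv]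
      have hppow : ((p : ℚ_[p]) ^ qz) ^ N = (p : ℚ_[p]) ^ v * ((p : ℚ_[p]) ^ (a.val : ℕ))⁻¹ := by
        rw [← zpow_natCast ((p : ℚ_[p]) ^ qz) N, ← zpow_mul, ← zpow_natCast (p : ℚ_[p]) a.val,
          eq_mul_inv_iff_mul_eq₀ (zpow_ne_zero _ hpQ), ← zpow_add₀ hpQ]
        congr 1
        linear_combination -hq
      rw [mul_pow, hzq, hwq, hppow, hxcu]
      have hnQ : ((n : ℕ) : ℚ_[p]) ≠ 0 := hliftne ub
      have hpa : ((p : ℚ_[p]) ^ (a.val : ℕ)) ≠ 0 := pow_ne_zero _ hpQ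
      have hpv : ((p : ℚ_[p]) ^ v) ≠ 0 := zpow_ne_zero _ hpQ
      field_simp
  have : Finite (ℚ_[p]ˣ ⧸ G) := Finite.of_surjective _ hsurj
  exact Subgroup.finiteIndex_of_finite_quotient
end

section
/- Let p be a prime, e, N₀, M₀ ≥ 1 integers with M₀ > v_p(e). Then the map x ↦ x^e is injective on Q_{N₀,M₀}^* and its image is exactly Q_{eN₀, v_p(e)+M₀}^*. -/
open PadicInt

section AuxLemmas

variable {p : ℕ} [Fact p.Prime]

/-- binomial-type decomposition -/
private lemma one_add_pow_eq {R : Type*} [CommRing R] (t : R) (e : ℕ) :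
    ∃ s : R, (1 + t) ^ e = 1 + (e : R) * t + t ^ 2 * s := by
  induction e with
  | zero => exact ⟨0, by push_cast; ring⟩
  | succ n ih =>
    obtain ⟨s, hs⟩ := ih
    exact ⟨s + n + s * t, by rw [pow_succ, hs]; push_cast; ring⟩

private lemma norm_le_iff_dvd (z : ℤ_[p]) (n : ℕ) :
    ‖z‖ ≤ (p : ℝ) ^ (-n : ℤ) ↔ (p : ℤ_[p]) ^ n ∣ z := by
  rw [PadicInt.norm_le_pow_iff_mem_span_pow, Ideal.mem_span_singleton]

private lemma norm_natCast_eq {e : ℕ} (he : e ≠ 0) :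
    ‖(e : ℤ_[p])‖ = (p : ℝ) ^ (-(padicValNat p e) : ℤ) := by
  have hp := (Fact.out : p.Prime)
  have hfac : p ^ (padicValNat p e) * (e / p ^ (padicValNat p e)) = e := by
    rw [← Nat.factorization_def e hp]
    exact Nat.ordProj_mul_ordCompl_eq_self e p
  have hnd : ¬ (p : ℤ) ∣ (e / p ^ (padicValNat p e) : ℕ) := by
    rw [Int.natCast_dvd_natCast, ← Nat.factorization_def e hp]
    exact Nat.not_dvd_ordCompl hp he
  have h1 : ‖((e / p ^ (padicValNat p e) : ℕ) : ℤ_[p])‖ = 1 := by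
    rcases lt_or_eq_of_le (PadicInt.norm_le_one ((e / p ^ (padicValNat p e) : ℕ) : ℤ_[p])) with h | h
    · exfalso
      rw [show ((e / p ^ (padicValNat p e) : ℕ) : ℤ_[p])
          = (((e / p ^ (padicValNat p e) : ℕ) : ℤ) : ℤ_[p]) by norm_cast] at h
      exact hnd ((PadicInt.norm_int_lt_one_iff_dvd _).1 h)
    · exact h
  calc ‖(e : ℤ_[p])‖ = ‖((p ^ (padicValNat p e) * (e / p ^ (padicValNat p e)) : ℕ) : ℤ_[p])‖ := by
        rw [hfac]
    _ = ‖(p : ℤ_[p]) ^ (padicValNat p e)‖ * ‖((e / p ^ (padicValNat p e) : ℕ) : ℤ_[p])‖ := by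
        push_cast; rw [norm_mul]
    _ = (p : ℝ) ^ (-(padicValNat p e) : ℤ) := by rw [h1, PadicInt.norm_p_pow, mul_one]

end AuxLemmas

section Core

variable {p : ℕ} [Fact p.Prime]

private lemma pow_one_add_sub_one_dvd {e M : ℕ} (hvM : padicValNat p e < M) {t : ℤ_[p]}
    (ht : (p : ℤ_[p]) ^ M ∣ t) :
    (p : ℤ_[p]) ^ (padicValNat p e + M) ∣ (1 + t) ^ e - 1 := by
  obtain ⟨s, hs⟩ := one_add_pow_eq t e
  have hdecomp : (1 + t) ^ e - 1 = (e : ℤ_[p]) * t + t ^ 2 * s := by rw [hs]; ring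
  rw [hdecomp]
  have hpe : (p : ℤ_[p]) ^ (padicValNat p e) ∣ (e : ℤ_[p]) := by
    have := Nat.cast_dvd_cast (α := ℤ_[p]) (pow_padicValNat_dvd (p := p) (n := e))
    push_cast at this
    exact this
  have h1 : (p : ℤ_[p]) ^ (padicValNat p e + M) ∣ (e : ℤ_[p]) * t := by
    rw [pow_add]; exact mul_dvd_mul hpe ht
  have h2 : (p : ℤ_[p]) ^ (padicValNat p e + M) ∣ t ^ 2 * s := by
    have ht2 : (p : ℤ_[p]) ^ (padicValNat p e + M) ∣ t ^ 2 := by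
      refine dvd_trans (pow_dvd_pow _ (by omega : padicValNat p e + M ≤ M + M)) ?_
      rw [pow_add, sq]
      exact mul_dvd_mul ht ht
    exact ht2.mul_right s
  exact dvd_add h1 h2

private lemma root_close {e M : ℕ} (he : e ≠ 0) (hvM : padicValNat p e < M)
    {z c : ℤ_[p]} (hz : z ^ e = c) (hc : (p : ℤ_[p]) ^ (padicValNat p e + M) ∣ c - 1)
    (hclose : ‖z - 1‖ < (p : ℝ) ^ (-(padicValNat p e : ℤ))) :
    (p : ℤ_[p]) ^ M ∣ z - 1 := by
  have hp1 : 1 < (p : ℝ) := by exact_mod_cast (Fact.out : p.Prime).one_lt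
  have hp0 : (0 : ℝ) < (p : ℝ) := by linarith
  set v := padicValNat p e with hv
  obtain ⟨s, hs⟩ := one_add_pow_eq (z - 1) e
  set t := z - 1 with htdef
  have hz' : (1 + t) ^ e = c := by rw [htdef]; simpa using hz
  have hct : c - 1 = (e : ℤ_[p]) * t + t ^ 2 * s := by
    rw [← hz', hs]; ring
  rw [← norm_le_iff_dvd]
  by_contra hcon
  push_neg at hcon
  have ht0 : t ≠ 0 := by
    intro h; rw [h, norm_zero] at hcon
    exact absurd hcon (not_lt.2 (zpow_nonneg hp0.le _))
  have htpos : 0 < ‖t‖ := norm_pos_iff.2 ht0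
  have hnet : ‖(e : ℤ_[p]) * t‖ = (p : ℝ) ^ (-(v : ℤ)) * ‖t‖ := by
    rw [norm_mul, norm_natCast_eq he]
  have hsplit : (p : ℝ) ^ (-((v + M : ℕ)) : ℤ) = (p : ℝ) ^ (-(v : ℤ)) * (p : ℝ) ^ (-(M : ℤ)) := by
    rw [← zpow_add₀ (ne_of_gt hp0)]
    congr 1
    push_cast; ring
  have hc1 : ‖c - 1‖ < (p : ℝ) ^ (-(v : ℤ)) * ‖t‖ := by
    calc ‖c - 1‖ ≤ (p : ℝ) ^ (-((v + M : ℕ)) : ℤ) := (norm_le_iff_dvd _ _).2 hc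
      _ = (p : ℝ) ^ (-(v : ℤ)) * (p : ℝ) ^ (-(M : ℤ)) := hsplit
      _ < (p : ℝ) ^ (-(v : ℤ)) * ‖t‖ := by
          apply mul_lt_mul_of_pos_left hcon (zpow_pos hp0 _)
  have hts : ‖t ^ 2 * s‖ < (p : ℝ) ^ (-(v : ℤ)) * ‖t‖ := by
    calc ‖t ^ 2 * s‖ ≤ ‖t‖ ^ 2 * 1 := by
          rw [norm_mul, norm_pow]
          exact mul_le_mul_of_nonneg_left (PadicInt.norm_le_one s) (by positivity)
      _ = ‖t‖ * ‖t‖ := by ring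
      _ < (p : ℝ) ^ (-(v : ℤ)) * ‖t‖ := mul_lt_mul_of_pos_right hclose htpos
  have : ‖(e : ℤ_[p]) * t‖ < (p : ℝ) ^ (-(v : ℤ)) * ‖t‖ := by
    have he : (e : ℤ_[p]) * t = (c - 1) + (-(t ^ 2 * s)) := by rw [hct]; ring
    rw [he]
    exact lt_of_le_of_lt (PadicInt.nonarchimedean _ _)
      (max_lt hc1 (by rwa [norm_neg]))
  rw [hnet] at this
  exact absurd this (lt_irrefl _)

end Core

section Hensel

variable {p : ℕ} [Fact p.Prime]

private lemma exists_unique_pow_root {e M : ℕ} (he : 1 ≤ e) (hvM : padicValNat p e < M)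
    (c : ℤ_[p]) (hc : (p : ℤ_[p]) ^ (padicValNat p e + M) ∣ c - 1) :
    ∃ z : ℤ_[p], z ^ e = c ∧ (p : ℤ_[p]) ^ M ∣ z - 1 ∧
      ∀ z' : ℤ_[p], z' ^ e = c → (p : ℤ_[p]) ^ M ∣ z' - 1 → z' = z := by
  have hp1 : 1 < (p : ℝ) := by exact_mod_cast (Fact.out : p.Prime).one_lt
  have hp0 : (0 : ℝ) < (p : ℝ) := by linarith
  have he0 : e ≠ 0 := by omega
  set v := padicValNat p e with hv
  set F : Polynomial ℤ_[p] := Polynomial.X ^ e - Polynomial.C c with hF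
  have heval : ∀ x : ℤ_[p], F.eval x = x ^ e - c := by intro x; simp [hF]
  have hderiv : F.derivative.eval 1 = (e : ℤ_[p]) := by
    simp [hF, Polynomial.derivative_X_pow]
  have hnorm1 : ‖F.eval 1‖ ≤ (p : ℝ) ^ (-((v + M : ℕ)) : ℤ) := by
    rw [heval, one_pow]
    rw [norm_le_iff_dvd]
    have := hc.neg_right
    simpa using this
  have hnormD : ‖F.derivative.eval 1‖ = (p : ℝ) ^ (-(v : ℤ)) := by
    rw [hderiv, norm_natCast_eq he0]
  have hnorm : ‖F.eval 1‖ < ‖F.derivative.eval 1‖ ^ 2 := by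
    rw [hnormD, ← zpow_natCast _ 2, ← zpow_mul]
    refine lt_of_le_of_lt hnorm1 (zpow_lt_zpow_right₀ hp1 ?_)
    push_cast
    omega
  obtain ⟨z, hz0, hzclose, -, huniq⟩ := hensels_lemma hnorm
  simp only [Polynomial.coe_aeval_eq_eval] at hz0 hzclose huniq
  have hze : z ^ e = c := by
    have h := heval z; rw [hz0] at h; exact sub_eq_zero.1 h.symm
  have hzdvd : (p : ℤ_[p]) ^ M ∣ z - 1 :=
    root_close he0 hvM hze hc (by rwa [hnormD] at hzclose)
  refine ⟨z, hze, hzdvd, fun z' hz'e hz'dvd => ?_⟩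
  apply huniq
  · rw [heval, hz'e, sub_self]
  · rw [hnormD]
    calc ‖z' - 1‖ ≤ (p : ℝ) ^ (-(M : ℤ)) := (norm_le_iff_dvd _ _).2 hz'dvd
      _ < (p : ℝ) ^ (-(v : ℤ)) := zpow_lt_zpow_right₀ hp1 (by omega)

end Hensel

/-- The set `Q_{N,M}^* = ⋃_{k ∈ ℤ} p^{kN} (1 + p^M ℤ_p)` inside `ℚ_p`. -/
def Qstar (p : ℕ) [Fact p.Prime] (N M : ℕ) : Set ℚ_[p] :=
  {x | ∃ (k : ℤ) (u : ℤ_[p]), x = (p : ℚ_[p]) ^ (k * (N : ℤ)) * (1 + (p : ℚ_[p]) ^ M * u)}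

/-- Let `p` be a prime and `e, N₀, M₀ ≥ 1` integers with `M₀ > v_p(e)`.
Then `x ↦ x ^ e` is injective on `Q_{N₀,M₀}^*` and its image is exactly
`Q_{e·N₀, v_p(e) + M₀}^*`. -/
theorem pow_injOn_Qstar_and_image (p : ℕ) [Fact p.Prime] (e N₀ M₀ : ℕ)
    (he : 1 ≤ e) (hN : 1 ≤ N₀) (hM : 1 ≤ M₀) (hvM : padicValNat p e < M₀) :
    Set.InjOn (fun x : ℚ_[p] => x ^ e) (Qstar p N₀ M₀) ∧
    (fun x : ℚ_[p] => x ^ e) '' Qstar p N₀ M₀ = Qstar p (e * N₀) (padicValNat p e + M₀) := by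
  have hp1 : 1 < (p : ℝ) := by exact_mod_cast (Fact.out : p.Prime).one_lt
  have hpR : (0 : ℝ) < (p : ℝ) := by linarith
  have hp0 : (p : ℚ_[p]) ≠ 0 := by
    exact_mod_cast (Fact.out : p.Prime).ne_zero
  set v := padicValNat p e with hv
  -- units of the form 1 + p^m u have norm one
  have hunit : ∀ (u : ℤ_[p]) (m : ℕ), 1 ≤ m → ‖(1 + (p : ℤ_[p]) ^ m * u : ℤ_[p])‖ = 1 := by
    intro u m hm
    rcases lt_or_eq_of_le (PadicInt.norm_le_one (1 + (p : ℤ_[p]) ^ m * u)) with h | h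
    · exfalso
      have h1 : (p : ℤ_[p]) ∣ 1 + (p : ℤ_[p]) ^ m * u := (PadicInt.norm_lt_one_iff_dvd _).1 h
      have h2 : (p : ℤ_[p]) ∣ (p : ℤ_[p]) ^ m * u :=
        Dvd.dvd.mul_right (dvd_pow_self _ (by omega : m ≠ 0)) u
      have h3 : (p : ℤ_[p]) ∣ 1 := by
        have := dvd_sub h1 h2; simpa using this
      exact PadicInt.prime_p.not_unit (isUnit_of_dvd_one h3)
    · exact h
  -- the cast identity
  have hcast : ∀ (u : ℤ_[p]) (m : ℕ),
      ((1 + (p : ℤ_[p]) ^ m * u : ℤ_[p]) : ℚ_[p]) = 1 + (p : ℚ_[p]) ^ m * (u : ℚ_[p]) := by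
    intro u m; push_cast; ring
  constructor
  · -- injectivity
    rintro x ⟨k, u₁, rfl⟩ y ⟨l, u₂, rfl⟩ hxy
    simp only at hxy
    set z₁ : ℤ_[p] := 1 + (p : ℤ_[p]) ^ M₀ * u₁ with hz₁
    set z₂ : ℤ_[p] := 1 + (p : ℤ_[p]) ^ M₀ * u₂ with hz₂
    rw [← hcast u₁ M₀, ← hcast u₂ M₀] at hxy ⊢
    -- compare norms to get k = l
    have hnorm : ∀ (a : ℤ) (z : ℤ_[p]), ‖z‖ = 1 →
        ‖((p : ℚ_[p]) ^ a * (z : ℚ_[p])) ^ e‖ = (p : ℝ) ^ ((-a) * (e : ℤ)) := by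
      intro a z hz
      rw [_root_.norm_pow, _root_.norm_mul, Padic.norm_p_zpow, ← PadicInt.norm_def, hz, mul_one,
        ← zpow_natCast ((p : ℝ) ^ (-a)) e, ← zpow_mul]
    have hkl : k = l := by
      have h1 := hnorm (k * N₀) z₁ (hunit u₁ M₀ hM)
      have h2 := hnorm (l * N₀) z₂ (hunit u₂ M₀ hM)
      rw [hxy] at h1
      rw [h1] at h2
      have := zpow_right_injective₀ hpR (ne_of_gt hp1) h2
      have hN0 : (N₀ : ℤ) ≠ 0 := Int.natCast_ne_zero.2 (by omega)
      have he0 : (e : ℤ) ≠ 0 := Int.natCast_ne_zero.2 (by omega)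
      have h3 : k * (N₀ : ℤ) = l * (N₀ : ℤ) := by
        have := mul_right_cancel₀ he0 (by linarith : (k * (N₀ : ℤ)) * e = (l * (N₀ : ℤ)) * e)
        exact this
      exact mul_right_cancel₀ hN0 h3
    subst hkl
    -- cancel the power of p
    have hzpow : ((p : ℚ_[p]) ^ (k * (N₀ : ℤ))) ^ e ≠ 0 := pow_ne_zero _ (zpow_ne_zero _ hp0)
    have hze : (z₁ : ℚ_[p]) ^ e = (z₂ : ℚ_[p]) ^ e := by
      rw [mul_pow, mul_pow] at hxy
      exact mul_left_cancel₀ hzpow hxy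
    have hzeZ : z₁ ^ e = z₂ ^ e := by
      have : ((z₁ ^ e : ℤ_[p]) : ℚ_[p]) = ((z₂ ^ e : ℤ_[p]) : ℚ_[p]) := by push_cast; exact hze
      exact Subtype.coe_injective this
    -- uniqueness of e-th roots in 1 + p^M₀ ℤ_p
    have hc : (p : ℤ_[p]) ^ (v + M₀) ∣ z₂ ^ e - 1 :=
      pow_one_add_sub_one_dvd hvM (Dvd.intro u₂ rfl)
    obtain ⟨z, hzroot, hzd, huniq⟩ := exists_unique_pow_root he hvM (z₂ ^ e) hc
    have e₁ : z₁ = z := huniq z₁ hzeZ ⟨u₁, by rw [hz₁]; ring⟩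
    have e₂ : z₂ = z := huniq z₂ rfl ⟨u₂, by rw [hz₂]; ring⟩
    rw [show (1 + (p : ℤ_[p]) ^ M₀ * u₁) = 1 + (p : ℤ_[p]) ^ M₀ * u₂ from e₁.trans e₂.symm]
  · -- image
    ext y
    constructor
    · rintro ⟨x, ⟨k, u, rfl⟩, rfl⟩
      simp only
      set z : ℤ_[p] := 1 + (p : ℤ_[p]) ^ M₀ * u with hz
      obtain ⟨w, hw⟩ := pow_one_add_sub_one_dvd (p := p) hvM (Dvd.intro u rfl)
      have hzew : z ^ e = 1 + (p : ℤ_[p]) ^ (v + M₀) * w := by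
        rw [← hz] at hw
        have := sub_eq_iff_eq_add.1 hw
        rw [this]; ring
      refine ⟨k, w, ?_⟩
      rw [← hcast u M₀, mul_pow, ← zpow_natCast ((p : ℚ_[p]) ^ (k * (N₀ : ℤ))) e, ← zpow_mul]
      have hexp : k * (N₀ : ℤ) * e = k * ((e * N₀ : ℕ) : ℤ) := by push_cast; ring
      rw [hexp]
      congr 1
      have : ((z ^ e : ℤ_[p]) : ℚ_[p]) = ((1 + (p : ℤ_[p]) ^ (v + M₀) * w : ℤ_[p]) : ℚ_[p]) := by
        rw [hzew]
      push_cast at this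
      rw [← this]
    · rintro ⟨k, w, rfl⟩
      set c : ℤ_[p] := 1 + (p : ℤ_[p]) ^ (v + M₀) * w with hcdef
      have hc : (p : ℤ_[p]) ^ (v + M₀) ∣ c - 1 := ⟨w, by rw [hcdef]; ring⟩
      obtain ⟨z, hzroot, hzd, -⟩ := exists_unique_pow_root he hvM c hc
      obtain ⟨u, hu⟩ := hzd
      have hzu : z = 1 + (p : ℤ_[p]) ^ M₀ * u := by
        have := sub_eq_iff_eq_add.1 hu; rw [this]; ring
      refine ⟨(p : ℚ_[p]) ^ (k * (N₀ : ℤ)) * (z : ℚ_[p]), ⟨k, u, by rw [hzu, hcast]⟩, ?_⟩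
      simp only
      rw [mul_pow, ← zpow_natCast ((p : ℚ_[p]) ^ (k * (N₀ : ℤ))) e, ← zpow_mul]
      have hexp : k * (N₀ : ℤ) * e = k * ((e * N₀ : ℕ) : ℤ) := by push_cast; ring
      rw [hexp]
      congr 1
      have : ((z ^ e : ℤ_[p]) : ℚ_[p]) = ((c : ℤ_[p]) : ℚ_[p]) := by rw [hzroot]
      push_cast at this
      rw [this, hcdef]
      push_cast
      ring
end

section
/- Let p be an odd prime. For all x, y ∈ ℚ_p one has |y|_p ≤ |x|_p if and only if there exists z ∈ ℚ_p with z² = x² + p·y². -/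
open Polynomial

private lemma exists_sq_one_add {p : ℕ} [Fact p.Prime] (hp : p ≠ 2) (u : ℚ_[p])
    (hu : ‖u‖ < 1) : ∃ z : ℚ_[p], z ^ 2 = 1 + u := by
  have h1 : ‖(1 : ℚ_[p]) + u‖ ≤ 1 := by
    refine le_trans (Padic.nonarchimedean _ _) ?_
    simp [hu.le]
  set c : ℤ_[p] := ⟨1 + u, h1⟩ with hc
  set F : Polynomial ℤ_[p] := X ^ 2 - C c with hF
  have he1 : F.eval 1 = 1 - c := by simp [hF]
  have hd : F.derivative = C 2 * X := by
    simp [hF, derivative_X_pow]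
    rw [one_add_one_eq_two, map_ofNat]
  have hd1 : F.derivative.eval 1 = 2 := by rw [hd]; simp
  have h2 : ‖(2 : ℤ_[p])‖ = 1 := by
    have hle : ‖(2 : ℤ_[p])‖ ≤ 1 := PadicInt.norm_le_one _
    have hnlt : ¬ ‖(2 : ℤ_[p])‖ < 1 := by
      intro hlt
      have : ((2 : ℤ) : ℤ_[p]) = (2 : ℤ_[p]) := by norm_cast
      rw [← this, PadicInt.norm_int_lt_one_iff_dvd] at hlt
      have : p ∣ 2 := by exact_mod_cast hlt
      exact hp ((Nat.prime_dvd_prime_iff_eq (Fact.out) Nat.prime_two).mp this)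
    linarith [lt_or_eq_of_le hle |>.resolve_left hnlt]
  have hnorm : ‖F.eval 1‖ < ‖F.derivative.eval 1‖ ^ 2 := by
    rw [he1, hd1, h2, one_pow]
    have : ((1 - c : ℤ_[p]) : ℚ_[p]) = -u := by
      push_cast [hc]
      show (1:ℚ_[p]) - (1 + u) = -u
      ring
    rw [PadicInt.norm_def, this, norm_neg]
    exact hu
  obtain ⟨z, hz, -⟩ := hensels_lemma hnorm
  refine ⟨(z : ℚ_[p]), ?_⟩
  have : z ^ 2 = c := by
    have := hz
    simp [hF, sub_eq_zero] at this
    exact this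
  calc (z : ℚ_[p]) ^ 2 = ((z ^ 2 : ℤ_[p]) : ℚ_[p]) := by push_cast; ring
    _ = ((c : ℤ_[p]) : ℚ_[p]) := by rw [this]
    _ = 1 + u := rfl

/-- For an odd prime `p` and all `x y ∈ ℚ_p`,
`|y|_p ≤ |x|_p` iff `x² + p·y²` is a square in `ℚ_p`. -/
theorem norm_le_iff_isSquare_add_p_mul_sq (p : ℕ) [Fact p.Prime] (hp : p ≠ 2)
    (x y : ℚ_[p]) :
    ‖y‖ ≤ ‖x‖ ↔ ∃ z : ℚ_[p], z ^ 2 = x ^ 2 + p * y ^ 2 := by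
  have hp1 : (1 : ℝ) < (p : ℝ) := by
    exact_mod_cast (Fact.out : p.Prime).one_lt
  have hp0 : (0 : ℝ) < (p : ℝ) := by linarith
  constructor
  · intro h
    by_cases hx : x = 0
    · have hy : y = 0 := by
        rw [hx, norm_zero] at h
        exact norm_le_zero_iff.mp h
      exact ⟨0, by simp [hx, hy]⟩
    · set u : ℚ_[p] := p * y ^ 2 / x ^ 2 with hu
      have hxn : (0 : ℝ) < ‖x‖ := norm_pos_iff.mpr hx
      have hun : ‖u‖ < 1 := by
        rw [hu, norm_div, norm_mul, norm_pow, norm_pow, Padic.norm_p]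
        rw [div_lt_one (by positivity)]
        have hy2 : ‖y‖ ^ 2 ≤ ‖x‖ ^ 2 := by
          apply pow_le_pow_left₀ (norm_nonneg _) h
        calc (p : ℝ)⁻¹ * ‖y‖ ^ 2 ≤ (p : ℝ)⁻¹ * ‖x‖ ^ 2 := by
              apply mul_le_mul_of_nonneg_left hy2 (by positivity)
          _ < 1 * ‖x‖ ^ 2 := by
              apply mul_lt_mul_of_pos_right _ (by positivity)
              rw [inv_lt_one_iff₀]; right; exact hp1
          _ = ‖x‖ ^ 2 := one_mul _
      obtain ⟨w, hw⟩ := exists_sq_one_add hp u hun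
      refine ⟨x * w, ?_⟩
      have : (x * w) ^ 2 = x ^ 2 * (1 + u) := by rw [mul_pow, hw]
      rw [this, hu]
      field_simp
  · rintro ⟨z, hz⟩
    by_contra h
    push_neg at h
    have hy : y ≠ 0 := by
      intro hy0
      rw [hy0, norm_zero] at h
      exact absurd h (not_lt.mpr (norm_nonneg _))
    have hpy2 : ‖(p : ℚ_[p]) * y ^ 2‖ = (p : ℝ) ^ (-(1 + 2 * y.valuation)) := by
      rw [norm_mul, norm_pow, Padic.norm_p, Padic.norm_eq_zpow_neg_valuation hy,
        ← zpow_natCast ((p:ℝ) ^ (-y.valuation)), ← zpow_mul, ← zpow_neg_one,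
        ← zpow_add₀ (ne_of_gt hp0)]
      ring_nf
    have hkey : ‖x ^ 2‖ < ‖(p : ℚ_[p]) * y ^ 2‖ := by
      rw [hpy2]
      by_cases hx : x = 0
      · rw [hx]
        simp only [norm_zero, ne_eq, OfNat.ofNat_ne_zero, not_false_eq_true, zero_pow]
        positivity
      · rw [norm_pow, Padic.norm_eq_zpow_neg_valuation hx, ← zpow_natCast ((p:ℝ) ^ (-x.valuation)),
          ← zpow_mul]
        apply zpow_right_strictMono₀ hp1
        have hval : x.valuation ≥ y.valuation + 1 := by
          have := h
          rw [Padic.norm_eq_zpow_neg_valuation hx, Padic.norm_eq_zpow_neg_valuation hy] at this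
          have := (zpow_right_strictMono₀ hp1).lt_iff_lt.mp this
          omega
        omega
    have hzn : ‖z ^ 2‖ = ‖(p : ℚ_[p]) * y ^ 2‖ := by
      rw [hz, Padic.add_eq_max_of_ne (ne_of_lt hkey), max_eq_right hkey.le]
    have hz0 : z ≠ 0 := by
      intro hz0
      rw [hz0] at hzn
      simp only [ne_eq, OfNat.ofNat_ne_zero, not_false_eq_true, zero_pow, norm_zero] at hzn
      rw [hpy2] at hzn
      have : (0:ℝ) < (p : ℝ) ^ (-(1 + 2 * y.valuation)) := by positivity
      linarith [hzn ▸ this]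
    rw [hpy2, norm_pow, Padic.norm_eq_zpow_neg_valuation hz0, ← zpow_natCast ((p:ℝ) ^ (-z.valuation)),
      ← zpow_mul] at hzn
    have := (zpow_right_strictMono₀ hp1).injective hzn
    omega
end

section
/- Let ℒ be a first-order language containing the language of rings and let ℚ_p carry an ℒ-structure extending its ring structure. Assume Denef's cell decomposition holds in (ℚ_p, ℒ): for every m ≥ 0 and every finite family 𝒜 of definable subsets of ℚ_p^{m+1} there exist N ≥ 1 and a finite family of presented cells mod P_N^* refining 𝒜. Then (ℚ_p, ℒ) has definable Skolem functions: for all m, n ≥ 1 and every definable S ⊆ ℚ_p^{m+n}, the coordinate projection of S onto ℚ_p^m admits a definable section over its image. -/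
/-!
Setting: `(ℚ_p, ℒ)` is an expansion of the field `ℚ_p` of `p`-adic numbers, i.e. `ℒ` is a
first-order language containing the language of rings (witnessed by a language morphism
`φ : Language.ring →ᴸ L` which is an expansion on `ℚ_p`), and `ℚ_p` carries an
`ℒ`-structure extending its ring structure.  "Definable" means `ℒ`-definable with
parameters from `ℚ_p`; "semi-algebraic" means definable in the language of rings with
parameters from `ℚ_p`.  Tuples in `ℚ_p^β` are modelled as functions `β → ℚ_p`.
-/

open FirstOrder Language

noncomputable section

namespace PadicMin

variable (p : ℕ) [Fact p.Prime]

/-- The canonical ring-language structure on `ℚ_p`. -/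
instance : Language.ring.Structure ℚ_[p] :=
  (FirstOrder.Ring.compatibleRingOfRing ℚ_[p]).toStructure

/-- `S ⊆ ℚ_p^β` is ℒ-definable with parameters from `ℚ_p`. -/
def LDef (L : Language) [L.Structure ℚ_[p] ] {β : Type} (S : Set (β → ℚ_[p])) : Prop :=
  Set.Definable (Set.univ : Set ℚ_[p]) L S

/-- `S ⊆ ℚ_p^β` is semi-algebraic: definable with parameters in the language of rings. -/
def SemiAlg {β : Type} (S : Set (β → ℚ_[p])) : Prop :=
  Set.Definable (Set.univ : Set ℚ_[p]) Language.ring S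

/-- The function `f` is ℒ-definable (with parameters) on the set `X`: its graph over `X`
is a definable subset of `ℚ_p^β × ℚ_p`. -/
def DefFunOn (L : Language) [L.Structure ℚ_[p] ] {β : Type} (X : Set (β → ℚ_[p]))
    (f : (β → ℚ_[p]) → ℚ_[p]) : Prop :=
  LDef p L {z : β ⊕ Unit → ℚ_[p] | (z ∘ Sum.inl) ∈ X ∧ z (Sum.inr ()) = f (z ∘ Sum.inl)}

/-- A global ℒ-definable function `ℚ_p^β → ℚ_p`. -/
def DefFun (L : Language) [L.Structure ℚ_[p] ] {β : Type}
    (f : (β → ℚ_[p]) → ℚ_[p]) : Prop :=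
  DefFunOn p L Set.univ f

/-- The set `P_N = {x ∈ ℚ_p : ∃ y, y^N = x}` of `N`-th powers. -/
def PN (N : ℕ) : Set ℚ_[p] := {x | ∃ y : ℚ_[p], y ^ N = x}

/-- The set `P_N^* = P_N \ {0}` of nonzero `N`-th powers. -/
def PNstar (N : ℕ) : Set ℚ_[p] := {x | x ≠ 0 ∧ ∃ y : ℚ_[p], y ^ N = x}

/-- The set `Q_{N,M}^* = ⋃_{k ∈ ℤ} p^{kN}(1 + p^M ℤ_p)`, a subgroup of `ℚ_p^×`. -/
def Qstar (N M : ℕ) : Set ℚ_[p] :=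
  {x | ∃ (k : ℤ) (u : ℤ_[p]), x = (p : ℚ_[p]) ^ (k * (N : ℤ)) * (1 + (p : ℚ_[p]) ^ M * u)}

/-- A *basic* function on `ℚ_p^{β ⊕ Unit}` (the `Unit` coordinate being the last
variable): a polynomial in the last variable whose coefficients are global definable
functions of the remaining variables. -/
def IsBasicFn (L : Language) [L.Structure ℚ_[p] ] {β : Type}
    (f : (β ⊕ Unit → ℚ_[p]) → ℚ_[p]) : Prop :=
  ∃ (d : ℕ) (a : ℕ → (β → ℚ_[p]) → ℚ_[p]),
    (∀ j ≤ d, DefFun p L (a j)) ∧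
    ∀ z, f z = ∑ j ∈ Finset.range (d + 1), a j (z ∘ Sum.inl) * z (Sum.inr ()) ^ j

/-- A *basic set*: a set of the form `{z : f z ∈ P_N}` with `f` basic and `N ≥ 1`. -/
def IsBasicSet (L : Language) [L.Structure ℚ_[p] ] {β : Type}
    (S : Set (β ⊕ Unit → ℚ_[p])) : Prop :=
  ∃ (N : ℕ) (f : (β ⊕ Unit → ℚ_[p]) → ℚ_[p]),
    1 ≤ N ∧ IsBasicFn p L f ∧ S = {z | f z ∈ PN p N}

/-- Finite boolean combinations of sets satisfying the predicate `B`. -/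
inductive BoolComb {α : Type*} (B : Set α → Prop) : Set α → Prop
  | of {s : Set α} : B s → BoolComb B s
  | compl {s : Set α} : BoolComb B s → BoolComb B sᶜ
  | union {s t : Set α} : BoolComb B s → BoolComb B t → BoolComb B (s ∪ t)
  | inter {s t : Set α} : BoolComb B s → BoolComb B t → BoolComb B (s ∩ t)

/-- `(ℚ_p, ℒ)` is *p-optimal*: every definable subset of `ℚ_p^{m+1}` (for every `m`)
is a finite boolean combination of basic sets. -/
def POptimal (L : Language) [L.Structure ℚ_[p] ] : Prop :=
  ∀ (m : ℕ) (S : Set (Fin m ⊕ Unit → ℚ_[p])),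
    LDef p L S → BoolComb (IsBasicSet p L) S

/-- A boundary datum of a presented cell: either the constant `0`, the constant `∞`,
or a function with values in `ℚ_p`. -/
inductive CBound (K : Type*) (β : Type*) where
  | zero : CBound K β
  | inf : CBound K β
  | fn (f : (β → K) → K) : CBound K β

open scoped ENNReal NNReal

/-- The "norm value" of a boundary datum at a point, in `ℝ≥0∞` (`⊤` for `∞`). -/
def CBound.val {p : ℕ} [Fact p.Prime] {β : Type} :
    CBound ℚ_[p] β → (β → ℚ_[p]) → ℝ≥0∞
  | .zero, _ => 0
  | .inf, _ => ⊤
  | .fn f, x => (‖f x‖₊ : ℝ≥0∞)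

/-- Well-formedness of a boundary datum over a base `X`: in the function case, the
function must be definable on `X` with nonzero values there. -/
def CBound.WF {p : ℕ} [Fact p.Prime] (L : Language) [L.Structure ℚ_[p] ] {β : Type}
    (X : Set (β → ℚ_[p])) : CBound ℚ_[p] β → Prop
  | .zero => True
  | .inf => True
  | .fn f => (∀ x ∈ X, f x ≠ 0) ∧ DefFunOn p L X f

/-- A *presented cell mod `G`* in `ℚ_p^{m+1}`, where `G ⊆ ℚ_p` is (the underlying set of)
a subgroup of `ℚ_p^×` of finite index: a nonempty definable base `X ⊆ ℚ_p^m`, a definable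
center `c : X → ℚ_p`, boundaries `ν, μ` (each either a definable function `X → ℚ_p \ {0}`,
the constant `0`, or the constant `∞`), and `λ ∈ ℚ_p`, such that the fiber
`{t : |ν x| ≤ |t − c x| ≤ |μ x| ∧ t − c x ∈ λG}` over every `x ∈ X` is nonempty.
It is of type 0 if `λ = 0` and of type 1 otherwise. -/
structure PCell (L : Language) [L.Structure ℚ_[p] ] (m : ℕ) (G : Set ℚ_[p]) where
  base : Set (Fin m → ℚ_[p])
  base_nonempty : base.Nonempty
  base_def : LDef p L base
  c : (Fin m → ℚ_[p]) → ℚ_[p]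
  c_def : DefFunOn p L base c
  ν : CBound ℚ_[p] (Fin m)
  μ : CBound ℚ_[p] (Fin m)
  ν_wf : ν.WF L base
  μ_wf : μ.WF L base
  lam : ℚ_[p]
  fiber_nonempty : ∀ x ∈ base, ∃ t : ℚ_[p],
    ν.val x ≤ (‖t - c x‖₊ : ℝ≥0∞) ∧ (‖t - c x‖₊ : ℝ≥0∞) ≤ μ.val x ∧
    ∃ g ∈ G, t - c x = lam * g

/-- The underlying cellular set of a presented cell, inside `ℚ_p^{m+1}`
(indexed by `Fin m ⊕ Unit`, the `Unit` coordinate being the last variable `t`). -/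
def PCell.toSet {p : ℕ} [Fact p.Prime] {L : Language} [L.Structure ℚ_[p] ] {m : ℕ}
    {G : Set ℚ_[p]} (H : PCell p L m G) : Set (Fin m ⊕ Unit → ℚ_[p]) :=
  {z | (z ∘ Sum.inl) ∈ H.base ∧
    H.ν.val (z ∘ Sum.inl) ≤ (‖z (Sum.inr ()) - H.c (z ∘ Sum.inl)‖₊ : ℝ≥0∞) ∧
    (‖z (Sum.inr ()) - H.c (z ∘ Sum.inl)‖₊ : ℝ≥0∞) ≤ H.μ.val (z ∘ Sum.inl) ∧
    ∃ g ∈ G, z (Sum.inr ()) - H.c (z ∘ Sum.inl) = H.lam * g}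

/-- `(ℚ_p, ℒ)` has *definable Skolem functions*: for all `m, n`, every definable
`S ⊆ ℚ_p^{m+n}` admits a definable section of the coordinate projection onto `ℚ_p^m`
over the image of `S`. -/
def HasDefSkolem (L : Language) [L.Structure ℚ_[p] ] : Prop :=
  ∀ (m n : ℕ) (S : Set (Fin m ⊕ Fin n → ℚ_[p])), LDef p L S →
    ∃ σ : (Fin m → ℚ_[p]) → (Fin n → ℚ_[p]),
      LDef p L {z : Fin m ⊕ Fin n → ℚ_[p] |
        (∃ y : Fin n → ℚ_[p], Sum.elim (z ∘ Sum.inl) y ∈ S) ∧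
        (z ∘ Sum.inr) = σ (z ∘ Sum.inl)} ∧
      ∀ x : Fin m → ℚ_[p], (∃ y : Fin n → ℚ_[p], Sum.elim x y ∈ S) →
        Sum.elim x (σ x) ∈ S

/-- An ℒ-structure `M` is *p-minimal* (relative to the inclusion of languages
`φ : ring →ᴸ ℒ`): every ℒ-definable (with parameters from `M`) subset of `M` is
definable with parameters in the language of rings, via the reduct structure. -/
def PMinimalStruct (L : Language) (φ : Language.ring →ᴸ L) (M : Type)
    [L.Structure M] : Prop :=
  ∀ s : Set (Fin 1 → M), Set.Definable (Set.univ : Set M) L s →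
    letI : Language.ring.Structure M := φ.reduct M
    Set.Definable (Set.univ : Set M) Language.ring s

/-- `(ℚ_p, ℒ)` itself is *p-minimal*: every ℒ-definable subset of `ℚ_p` is
semi-algebraic. -/
def PMinimalQp (L : Language) [L.Structure ℚ_[p] ] : Prop :=
  ∀ s : Set (Fin 1 → ℚ_[p]), LDef p L s → SemiAlg p s

/-- `(ℚ_p, ℒ)` is *strongly p-minimal*: every ℒ-structure elementarily equivalent to it
is p-minimal. -/
def StronglyPMinimal (L : Language) [L.Structure ℚ_[p] ] (φ : Language.ring →ᴸ L) :
    Prop :=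
  ∀ (M : Type) [L.Structure M], (ℚ_[p] ≅[L] M) → PMinimalStruct L φ M

/-- `(ℚ_p, ℒ)` satisfies the *Extreme Value Property*: every continuous definable
function from a closed and bounded definable set `X ⊆ ℚ_p` to `|ℚ_p| \ {0}` attains a
minimum value.  (A function `g : X → |ℚ_p|` is definable when the set
`{(x, y) : x ∈ X ∧ |y| = g x}` is definable.) -/
def EVP (L : Language) [L.Structure ℚ_[p] ] : Prop :=
  ∀ (X : Set ℚ_[p]) (g : ℚ_[p] → ℝ),
    Set.Definable₁ (Set.univ : Set ℚ_[p]) L X →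
    IsClosed X → Bornology.IsBounded X → X.Nonempty →
    ContinuousOn g X →
    (∀ x ∈ X, ∃ y : ℚ_[p], y ≠ 0 ∧ ‖y‖ = g x) →
    LDef p L {z : Fin 2 → ℚ_[p] | z 0 ∈ X ∧ ‖z 1‖ = g (z 0)} →
    ∃ x₀ ∈ X, ∀ x ∈ X, g x₀ ≤ g x

/-- The image of `A ⊆ ℚ_p^m` under some injective coordinate projection to `ℚ_p^d`
has nonempty interior (for the `p`-adic topology). -/
def ProjNonemptyInterior (m d : ℕ) (A : Set (Fin m → ℚ_[p])) : Prop :=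
  ∃ ι : Fin d → Fin m, Function.Injective ι ∧
    (interior ((fun x : Fin m → ℚ_[p] => x ∘ ι) '' A)).Nonempty

/-- `A ⊆ ℚ_p^m` has dimension `dA` (in the sense of Haskell–Macpherson): `dA` is the
largest `d` with `1 ≤ d ≤ m` such that the image of `A` under some coordinate projection
`ℚ_p^m → ℚ_p^d` has nonempty interior, and `0` if there is no such `d`. -/
def HasDim (m : ℕ) (A : Set (Fin m → ℚ_[p])) (dA : ℕ) : Prop :=
  (dA = 0 ∧ ∀ d', 1 ≤ d' → ¬ ProjNonemptyInterior p m d' A) ∨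
  (1 ≤ dA ∧ ProjNonemptyInterior p m dA A ∧
    ∀ d', dA < d' → ¬ ProjNonemptyInterior p m d' A)

/-- A function on `ℚ_p^{β ⊕ γ}` which is polynomial in the `γ`-block of (the last)
variables, with global definable functions of the `β`-block as coefficients.
For `#γ = d` this is a *`d`-basic* function. -/
def IsPolyBasicFn (L : Language) [L.Structure ℚ_[p] ] {β γ : Type} [Fintype γ]
    (f : (β ⊕ γ → ℚ_[p]) → ℚ_[p]) : Prop :=
  ∃ (s : Finset (γ →₀ ℕ)) (a : (γ →₀ ℕ) → (β → ℚ_[p]) → ℚ_[p]),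
    (∀ e ∈ s, DefFun p L (a e)) ∧
    ∀ z, f z = ∑ e ∈ s, a e (z ∘ Sum.inl) * ∏ i : γ, z (Sum.inr i) ^ (e i)

/-- A `d`-basic set (`d = #γ`): `{z : f z ∈ P_N}` with `f` `d`-basic and `N ≥ 1`. -/
def IsPolyBasicSet (L : Language) [L.Structure ℚ_[p] ] {β γ : Type} [Fintype γ]
    (S : Set (β ⊕ γ → ℚ_[p])) : Prop :=
  ∃ (N : ℕ) (f : (β ⊕ γ → ℚ_[p]) → ℚ_[p]),
    1 ≤ N ∧ IsPolyBasicFn p L f ∧ S = {z | f z ∈ PN p N}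


/-! ### Auxiliary material for the proof -/

instance : FirstOrder.Ring.CompatibleRing ℚ_[p] := FirstOrder.Ring.compatibleRingOfRing ℚ_[p]

section Aux

variable {p}


lemma exists_nth_root_of_near_one {N : ℕ} (a : ℤ_[p])
    (ha : ‖a - 1‖ < ‖(N : ℤ_[p])‖ ^ 2) : ∃ z : ℤ_[p], z ^ N = a := by
  have h : ‖Polynomial.eval (1 : ℤ_[p]) (Polynomial.X ^ N - Polynomial.C a)‖ <
      ‖Polynomial.eval (1 : ℤ_[p])
        (Polynomial.derivative (Polynomial.X ^ N - Polynomial.C a))‖ ^ 2 := by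
    have h1 : Polynomial.eval (1 : ℤ_[p]) (Polynomial.X ^ N - Polynomial.C a) = 1 - a := by
      simp
    have h2 : Polynomial.eval (1 : ℤ_[p])
        (Polynomial.derivative (Polynomial.X ^ N - Polynomial.C a)) = (N : ℤ_[p]) := by
      simp [Polynomial.derivative_X_pow]
    rw [h1, h2, norm_sub_rev]
    exact ha
  obtain ⟨z, hz, -⟩ := hensels_lemma h
  refine ⟨z, ?_⟩
  have := hz
  simp only [Polynomial.coe_aeval_eq_eval, Polynomial.eval_sub, Polynomial.eval_pow, Polynomial.eval_X, Polynomial.eval_C,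
    sub_eq_zero] at this
  exact this

lemma padic_p_ne_zero : (p : ℚ_[p]) ≠ 0 :=
  Nat.cast_ne_zero.2 (Fact.out : p.Prime).ne_zero

lemma padic_one_lt_p : (1 : ℝ) < (p : ℝ) :=
  Nat.one_lt_cast.2 (Fact.out : p.Prime).one_lt

lemma exists_reps (N : ℕ) (hN : 1 ≤ N) :
    ∃ (R : ℕ) (reps : Fin R → ℚ_[p]), (∀ i, reps i ≠ 0) ∧
      ∀ w : ℚ_[p], w ≠ 0 → ∃ i, ∃ y : ℚ_[p], y ≠ 0 ∧ y ^ N = w / reps i := by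
  classical
  have hp : p.Prime := Fact.out
  have hNZ : (N : ℤ_[p]) ≠ 0 := Nat.cast_ne_zero.2 (by omega)
  have hnormN : 0 < ‖(N : ℤ_[p])‖ ^ 2 := by
    have h0 : ‖(N : ℤ_[p])‖ ≠ 0 := norm_ne_zero_iff.2 hNZ
    positivity
  have hpinv : (p : ℝ)⁻¹ < 1 := inv_lt_one_of_one_lt₀ padic_one_lt_p
  have hpinv0 : (0:ℝ) ≤ (p : ℝ)⁻¹ := by positivity
  obtain ⟨m₀, hm₀⟩ := exists_pow_lt_of_lt_one hnormN hpinv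
  set m : ℕ := m₀ + 1 with hm_def
  have hm : ((p : ℝ)⁻¹) ^ m < ‖(N : ℤ_[p])‖ ^ 2 := by
    calc ((p : ℝ)⁻¹) ^ m = ((p:ℝ)⁻¹) ^ m₀ * (p:ℝ)⁻¹ := by rw [pow_succ]
    _ ≤ ((p:ℝ)⁻¹) ^ m₀ * 1 := by
        exact mul_le_mul_of_nonneg_left hpinv.le (by positivity)
    _ = ((p:ℝ)⁻¹) ^ m₀ := by ring
    _ < _ := hm₀
  refine ⟨N * p ^ m, fun i =>
    if p ∣ ((finProdFinEquiv.symm i).2 : ℕ) then 1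
    else (p : ℚ_[p]) ^ (((finProdFinEquiv.symm i).1 : ℕ)) * (((finProdFinEquiv.symm i).2 : ℕ) : ℚ_[p]),
    ?_, ?_⟩
  · intro i
    dsimp only
    split
    · exact one_ne_zero
    · rename_i hnd
      have hn0 : ((finProdFinEquiv.symm i).2 : ℕ) ≠ 0 := by
        intro h0; exact hnd (h0 ▸ dvd_zero p)
      exact mul_ne_zero (pow_ne_zero _ padic_p_ne_zero) (Nat.cast_ne_zero.2 hn0)
  · intro w hw
    set v : ℤ := w.valuation with hv_def
    set u : ℚ_[p] := w * (p : ℚ_[p]) ^ (-v) with hu_def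
    have hpu : (p : ℚ_[p]) ^ (v) * (p : ℚ_[p]) ^ (-v) = 1 := by
      rw [← zpow_add₀ padic_p_ne_zero]; simp
    have hwu : w = (p : ℚ_[p]) ^ v * u := by
      rw [hu_def]; field_simp [zpow_ne_zero, padic_p_ne_zero]; exact hpu.symm
    have hu1 : ‖u‖ = 1 := by
      rw [hu_def, norm_mul, Padic.norm_p_zpow, Padic.norm_eq_zpow_neg_valuation hw,
        ← zpow_add₀ (Nat.cast_pos.2 (Fact.out : p.Prime).pos).ne']
      simp [hv_def]
    set u' : ℤ_[p] := ⟨u, hu1.le⟩ with hu'_def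
    have hu'1 : ‖u'‖ = 1 := hu1
    set n : ℕ := u'.appr m with hn_def
    have hspec := PadicInt.appr_spec m u'
    have hn_norm : ‖u' - (n : ℤ_[p])‖ ≤ (p : ℝ) ^ (-(m:ℤ)) :=
      (PadicInt.norm_le_pow_iff_mem_span_pow _ m).2 hspec
    have hpm : ((p:ℝ))^(-(m:ℤ)) = ((p:ℝ)⁻¹)^m := by
      rw [zpow_neg, inv_pow, zpow_natCast]
    have hlt1 : ‖u' - (n : ℤ_[p])‖ < 1 := by
      refine lt_of_le_of_lt hn_norm ?_
      rw [hpm]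
      calc ((p:ℝ)⁻¹)^m ≤ ((p:ℝ)⁻¹)^1 := by
            apply pow_le_pow_of_le_one hpinv0 hpinv.le; omega
      _ = (p:ℝ)⁻¹ := pow_one _
      _ < 1 := hpinv
    have hnu : ‖(n : ℤ_[p])‖ = 1 := by
      have h1 : ‖(n : ℤ_[p])‖ ≤ 1 := PadicInt.norm_le_one _
      have h2 : (1:ℝ) ≤ ‖(n : ℤ_[p])‖ := by
        by_contra hcon
        push_neg at hcon
        have : ‖u'‖ < 1 := by
          have : u' = (u' - n) + n := by ring
          rw [this]
          exact lt_of_le_of_lt (PadicInt.nonarchimedean _ _) (max_lt hlt1 hcon)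
        rw [hu'1] at this; exact lt_irrefl _ this
      linarith
    have hpn : ¬ (p ∣ n) := by
      intro hdvd
      have : ‖((n : ℤ) : ℤ_[p])‖ < 1 := by
        rw [PadicInt.norm_int_lt_one_iff_dvd]
        exact_mod_cast hdvd
      rw [Int.cast_natCast] at this
      rw [hnu] at this; exact lt_irrefl _ this
    have hnIsUnit : IsUnit ((n : ℤ_[p])) := PadicInt.isUnit_iff.2 hnu
    set ninv : ℤ_[p] := ↑hnIsUnit.unit⁻¹ with hninv_def
    have hninv1 : ‖ninv‖ = 1 := PadicInt.norm_units _
    have hninvmul : ninv * (n : ℤ_[p]) = 1 := by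
      rw [hninv_def]
      have := hnIsUnit.unit_spec
      calc (↑hnIsUnit.unit⁻¹ : ℤ_[p]) * (n : ℤ_[p]) = ↑hnIsUnit.unit⁻¹ * ↑hnIsUnit.unit := by
            rw [this]
      _ = 1 := by exact_mod_cast hnIsUnit.unit.inv_mul
    set a : ℤ_[p] := u' * ninv with ha_def
    have ha1 : ‖a - 1‖ < ‖(N : ℤ_[p])‖ ^ 2 := by
      have : a - 1 = (u' - n) * ninv := by
        rw [ha_def, sub_mul, ← hninvmul]; ring
      rw [this, norm_mul, hninv1, mul_one]
      exact lt_of_le_of_lt (hn_norm.trans (le_of_eq hpm)) hm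
    obtain ⟨z, hzN⟩ := exists_nth_root_of_near_one a ha1
    have han : a * (n : ℤ_[p]) = u' := by
      rw [ha_def, mul_assoc, hninvmul, mul_one]
    have hs0 : (0:ℤ) < (N:ℤ) := by exact_mod_cast hN
    have hsmod : 0 ≤ v % N := Int.emod_nonneg v (by omega)
    have hslt : v % N < N := Int.emod_lt_of_pos v hs0
    set s : ℕ := (v % N).toNat with hs_def
    have hs_cast : (s : ℤ) = v % N := Int.toNat_of_nonneg hsmod
    have hs_ltN : s < N := by omega
    set q : ℤ := v / N with hq_def
    have hvqs : v = N * q + s := by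
      rw [hs_cast, hq_def]
      have := Int.mul_ediv_add_emod v N
      omega
    have hnlt : n < p ^ m := PadicInt.appr_lt _ _
    set i : Fin (N * p ^ m) := finProdFinEquiv (⟨s, hs_ltN⟩, ⟨n, hnlt⟩) with hi_def
    refine ⟨i, (p:ℚ_[p]) ^ q * (z : ℚ_[p]), ?_, ?_⟩
    · have hz0 : (z : ℚ_[p]) ≠ 0 := by
        intro h0
        have : z = 0 := PadicInt.coe_eq_zero.1 h0
        rw [this] at hzN
        have : a = 0 := by
          rw [← hzN, zero_pow]; omega
        have : ‖a‖ = 0 := by rw [this, norm_zero]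
        have ha_norm : ‖a‖ = 1 := by
          rw [ha_def, norm_mul, hu'1, hninv1, mul_one]
        rw [ha_norm] at this; exact one_ne_zero this
      exact mul_ne_zero (zpow_ne_zero _ padic_p_ne_zero) hz0
    · have hrep : (if p ∣ (((finProdFinEquiv.symm i).2 : Fin (p^m)) : ℕ) then (1:ℚ_[p])
          else (p : ℚ_[p]) ^ (((finProdFinEquiv.symm i).1 : Fin N) : ℕ)
            * ((((finProdFinEquiv.symm i).2 : Fin (p^m)) : ℕ) : ℚ_[p]))
          = (p : ℚ_[p]) ^ s * (n : ℚ_[p]) := by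
        rw [hi_def, Equiv.symm_apply_apply]
        simp [hpn]
      dsimp only
      rw [hrep]
      have hden : (p : ℚ_[p]) ^ s * (n : ℚ_[p]) ≠ 0 := by
        refine mul_ne_zero (pow_ne_zero _ padic_p_ne_zero) ?_
        exact Nat.cast_ne_zero.2 (by intro h0; exact hpn (h0 ▸ dvd_zero p))
      rw [eq_div_iff hden]
      have hzNq : ((z : ℚ_[p])) ^ N * (n : ℚ_[p]) = u := by
        have : (z ^ N * (n : ℤ_[p]) : ℤ_[p]) = u' := by rw [hzN]; exact han
        calc ((z : ℚ_[p])) ^ N * (n : ℚ_[p]) = ((z ^ N * n : ℤ_[p]) : ℚ_[p]) := by push_cast; ring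
        _ = (u' : ℚ_[p]) := by rw [this]
        _ = u := rfl
      calc ((p:ℚ_[p]) ^ q * (z:ℚ_[p])) ^ N * ((p : ℚ_[p]) ^ s * (n : ℚ_[p]))
          = ((p:ℚ_[p]) ^ q) ^ N * (p:ℚ_[p]) ^ s * (((z:ℚ_[p])) ^ N * (n : ℚ_[p])) := by ring
        _ = (p:ℚ_[p]) ^ (q * N + s) * u := by
            rw [hzNq, ← zpow_natCast ((p:ℚ_[p]) ^ q) N, ← zpow_mul,
              ← zpow_natCast (p:ℚ_[p]) s, ← zpow_add₀ padic_p_ne_zero]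
        _ = (p:ℚ_[p]) ^ v * u := by
            congr 1
            rw [hvqs]; ring
        _ = w := hwu.symm

variable (L : Language) [L.Structure ℚ_[p] ]

lemma SemiAlg.toLDef (φ : Language.ring →ᴸ L) [φ.IsExpansionOn ℚ_[p] ] {β : Type} {S : Set (β → ℚ_[p])} (h : SemiAlg p S) : LDef p L S :=
  Set.Definable.map_expansion h φ

lemma semiAlg_poly {γ : Type} (q : MvPolynomial γ ℚ_[p]) :
    SemiAlg p {z : γ → ℚ_[p] | MvPolynomial.eval z q = 0} := by
  classical
  have h := FirstOrder.Ring.mvPolynomial_zeroLocus_definable ({q} : Finset (MvPolynomial γ ℚ_[p]))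
  have h2 := h.mono (Set.subset_univ _)
  have : MvPolynomial.zeroLocus ℚ_[p] (Ideal.span (({q} : Finset (MvPolynomial γ ℚ_[p])) :
      Set (MvPolynomial γ ℚ_[p]))) = {z : γ → ℚ_[p] | MvPolynomial.eval z q = 0} := by
    rw [MvPolynomial.zeroLocus_span]
    ext z
    simp
  rwa [this] at h2

lemma LDef_poly (φ : Language.ring →ᴸ L) [φ.IsExpansionOn ℚ_[p] ] {γ : Type} (q : MvPolynomial γ ℚ_[p]) :
    LDef p L {z : γ → ℚ_[p] | MvPolynomial.eval z q = 0} :=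
  SemiAlg.toLDef L φ (semiAlg_poly q)

lemma LDef.inter {γ : Type} {S T : Set (γ → ℚ_[p])} (hS : LDef p L S) (hT : LDef p L T) :
    LDef p L (S ∩ T) := Set.Definable.inter hS hT

lemma LDef.union {γ : Type} {S T : Set (γ → ℚ_[p])} (hS : LDef p L S) (hT : LDef p L T) :
    LDef p L (S ∪ T) := Set.Definable.union hS hT

lemma LDef.compl {γ : Type} {S : Set (γ → ℚ_[p])} (hS : LDef p L S) :
    LDef p L Sᶜ := Set.Definable.compl hS

lemma LDef.preimage {γ δ : Type} (f : γ → δ) {S : Set (γ → ℚ_[p])} (h : LDef p L S) :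
    LDef p L ((fun z : δ → ℚ_[p] => z ∘ f) ⁻¹' S) := Set.Definable.preimage_comp f h

lemma fin_iUnion_succ {γ : Type} {k : ℕ} (S : Fin (k+1) → Set γ) :
    (⋃ j, S j) = (⋃ j : Fin k, S j.castSucc) ∪ S (Fin.last k) := by
  ext x
  simp only [Set.mem_iUnion, Set.mem_union]
  constructor
  · rintro ⟨j, hj⟩
    rcases Fin.lastCases (motive := fun j => x ∈ S j → (∃ j : Fin k, x ∈ S j.castSucc) ∨
      x ∈ S (Fin.last k)) (fun h => Or.inr h) (fun j h => Or.inl ⟨j, h⟩) j hj with h | h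
    · exact Or.inl h
    · exact Or.inr h
  · rintro (⟨j, hj⟩ | hj)
    · exact ⟨j.castSucc, hj⟩
    · exact ⟨Fin.last k, hj⟩

lemma LDef.iUnion {γ : Type} {k : ℕ} {S : Fin k → Set (γ → ℚ_[p])}
    (h : ∀ j, LDef p L (S j)) : LDef p L (⋃ j, S j) := by
  induction k with
  | zero =>
    rw [Set.iUnion_of_empty]
    exact Set.definable_empty
  | succ k ih =>
    rw [fin_iUnion_succ]
    exact LDef.union L (ih (fun j => h j.castSucc)) (h (Fin.last k))

lemma LDef.iInter {γ : Type} {k : ℕ} {S : Fin k → Set (γ → ℚ_[p])}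
    (h : ∀ j, LDef p L (S j)) : LDef p L (⋂ j, S j) := by
  have : (⋂ j, S j) = (⋃ j, (S j)ᶜ)ᶜ := by
    simp [Set.compl_iUnion]
  rw [this]
  exact LDef.compl L (LDef.iUnion L (fun j => LDef.compl L (h j)))

lemma LDef.exists_elim {γ ε : Type} [Finite γ] [Finite ε] {T : Set (γ ⊕ ε → ℚ_[p])}
    (h : LDef p L T) : LDef p L {z : γ → ℚ_[p] | ∃ w : ε → ℚ_[p], Sum.elim z w ∈ T} := by
  have h2 := Set.Definable.image_comp h Sum.inl
  have heq : ((fun g : γ ⊕ ε → ℚ_[p] => g ∘ Sum.inl) '' T) =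
      {z : γ → ℚ_[p] | ∃ w : ε → ℚ_[p], Sum.elim z w ∈ T} := by
    ext z
    constructor
    · rintro ⟨t, ht, rfl⟩
      refine ⟨t ∘ Sum.inr, ?_⟩
      have : Sum.elim (t ∘ Sum.inl) (t ∘ Sum.inr) = t := by
        ext (x | x) <;> rfl
      rwa [this]
    · rintro ⟨w, hw⟩
      exact ⟨Sum.elim z w, hw, rfl⟩
  rwa [heq] at h2

lemma LDef_coset (φ : Language.ring →ᴸ L) [φ.IsExpansionOn ℚ_[p] ] {γ : Type} [Finite γ] (i : γ) (N : ℕ) (r : ℚ_[p]) (hr : r ≠ 0) :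
    LDef p L {w : γ → ℚ_[p] | w i / r ∈ PNstar p N} := by
  classical
  have h1 : LDef p L {w : γ → ℚ_[p] | w i ≠ 0} := by
    have := LDef_poly L φ (MvPolynomial.X i : MvPolynomial γ ℚ_[p])
    have h2 := LDef.compl L this
    convert h2 using 1
    ext w; simp
  have h2 : LDef p L {w : γ → ℚ_[p] | ∃ y : ℚ_[p], r * y ^ N = w i} := by
    have hT := LDef_poly L φ
      ((MvPolynomial.C r * MvPolynomial.X (Sum.inr ()) ^ N - MvPolynomial.X (Sum.inl i)) :
        MvPolynomial (γ ⊕ Unit) ℚ_[p])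
    have h3 := LDef.exists_elim L hT
    convert h3 using 1
    ext w
    simp only [Set.mem_setOf_eq]
    constructor
    · rintro ⟨y, hy⟩
      exact ⟨fun _ => y, by simp [sub_eq_zero, hy]⟩
    · rintro ⟨wy, hwy⟩
      simp only [Set.mem_setOf_eq, MvPolynomial.eval_sub, MvPolynomial.eval_mul,
        MvPolynomial.eval_C, MvPolynomial.eval_pow, MvPolynomial.eval_X, sub_eq_zero] at hwy
      exact ⟨wy (), hwy⟩
  have heq : {w : γ → ℚ_[p] | w i / r ∈ PNstar p N} =
      {w : γ → ℚ_[p] | w i ≠ 0} ∩ {w : γ → ℚ_[p] | ∃ y : ℚ_[p], r * y ^ N = w i} := by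
    ext w
    simp only [Set.mem_setOf_eq, Set.mem_inter_iff, PNstar]
    constructor
    · rintro ⟨hne, y, hy⟩
      refine ⟨fun h0 => hne (by simp [h0]), y, ?_⟩
      rw [hy]
      field_simp
    · rintro ⟨hne, y, hy⟩
      exact ⟨div_ne_zero hne hr, y, by rw [eq_div_iff hr, mul_comm, ← hy]⟩
  rw [heq]
  exact LDef.inter L h1 h2


lemma selector (φ : Language.ring →ᴸ L) [φ.IsExpansionOn ℚ_[p] ] {m : ℕ}
    (X : Set (Fin m → ℚ_[p])) (hX : LDef p L X)
    (c f : (Fin m → ℚ_[p]) → ℚ_[p]) (hc : DefFunOn p L X c) (hf : DefFunOn p L X f)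
    (N R : ℕ) (reps : Fin R → ℚ_[p]) (hreps : ∀ i, reps i ≠ 0) (e : Fin R → ℚ_[p])
    (hfX : ∀ x ∈ X, ∃ i, f x / reps i ∈ PNstar p N) :
    ∃ s : (Fin m → ℚ_[p]) → ℚ_[p],
      (∀ x ∈ X, ∃ i, f x / reps i ∈ PNstar p N ∧ s x = c x + e i * f x / reps i) ∧
      LDef p L {z : Fin m ⊕ Unit → ℚ_[p] | z ∘ Sum.inl ∈ X ∧ z (Sum.inr ()) = s (z ∘ Sum.inl)} := by
  classical
  set F : (Fin m → ℚ_[p]) → Finset (Fin R) :=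
    fun x => Finset.univ.filter (fun i => f x / reps i ∈ PNstar p N) with hF_def
  have hmem_F : ∀ x i, i ∈ F x ↔ f x / reps i ∈ PNstar p N := by
    intro x i; simp [hF_def]
  set s : (Fin m → ℚ_[p]) → ℚ_[p] := fun x =>
    if h : (F x).Nonempty then c x + e ((F x).min' h) * f x / reps ((F x).min' h) else 0
    with hs_def
  refine ⟨s, ?_, ?_⟩
  · intro x hx
    obtain ⟨i, hi⟩ := hfX x hx
    have hne : (F x).Nonempty := ⟨i, (hmem_F x i).2 hi⟩
    refine ⟨(F x).min' hne, (hmem_F x _).1 ((F x).min'_mem hne), ?_⟩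
    rw [hs_def]
    simp only [dif_pos hne]
  · set gc : Fin m ⊕ Unit → ((Fin m ⊕ Unit) ⊕ Fin 2) :=
      Sum.elim (Sum.inl ∘ Sum.inl) (fun _ => Sum.inr 0) with hgc
    set gf : Fin m ⊕ Unit → ((Fin m ⊕ Unit) ⊕ Fin 2) :=
      Sum.elim (Sum.inl ∘ Sum.inl) (fun _ => Sum.inr 1) with hgf
    set Ci : Fin R → Set (((Fin m ⊕ Unit) ⊕ Fin 2) → ℚ_[p]) :=
      fun i => {u | u (Sum.inr 1) / reps i ∈ PNstar p N} with hCi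
    set Ei : Fin R → Set (((Fin m ⊕ Unit) ⊕ Fin 2) → ℚ_[p]) := fun i =>
      {u | MvPolynomial.eval u
        (MvPolynomial.C (reps i) * MvPolynomial.X (Sum.inl (Sum.inr ()))
          - MvPolynomial.C (reps i) * MvPolynomial.X (Sum.inr 0)
          - MvPolynomial.C (e i) * MvPolynomial.X (Sum.inr 1)
          : MvPolynomial ((Fin m ⊕ Unit) ⊕ Fin 2) ℚ_[p]) = 0} with hEi
    set Ti : Fin R → Set (((Fin m ⊕ Unit) ⊕ Fin 2) → ℚ_[p]) := fun i =>
      ((fun u : ((Fin m ⊕ Unit) ⊕ Fin 2) → ℚ_[p] => u ∘ gc) ⁻¹'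
        {z' : Fin m ⊕ Unit → ℚ_[p] | z' ∘ Sum.inl ∈ X ∧ z' (Sum.inr ()) = c (z' ∘ Sum.inl)}) ∩
      ((fun u : ((Fin m ⊕ Unit) ⊕ Fin 2) → ℚ_[p] => u ∘ gf) ⁻¹'
        {z' : Fin m ⊕ Unit → ℚ_[p] | z' ∘ Sum.inl ∈ X ∧ z' (Sum.inr ()) = f (z' ∘ Sum.inl)}) ∩
      (Ci i) ∩ (⋂ i' : Fin R, if i' < i then (Ci i')ᶜ else Set.univ) ∩ (Ei i)
      with hTi
    have hTi_def : ∀ i, LDef p L (Ti i) := by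
      intro i
      refine LDef.inter L (LDef.inter L (LDef.inter L (LDef.inter L ?_ ?_) ?_) ?_) ?_
      · exact LDef.preimage L gc hc
      · exact LDef.preimage L gf hf
      · exact LDef_coset L φ (Sum.inr 1) N (reps i) (hreps i)
      · refine LDef.iInter L (fun i' => ?_)
        split
        · exact LDef.compl L (LDef_coset L φ (Sum.inr 1) N (reps i') (hreps i'))
        · exact Set.definable_univ
      · exact LDef_poly L φ _
    have hTi_mem : ∀ (z : Fin m ⊕ Unit → ℚ_[p]) (i : Fin R) (w : Fin 2 → ℚ_[p]),
        Sum.elim z w ∈ Ti i ↔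
        ((z ∘ Sum.inl ∈ X ∧ w 0 = c (z ∘ Sum.inl)) ∧
        (z ∘ Sum.inl ∈ X ∧ w 1 = f (z ∘ Sum.inl)) ∧
        (w 1 / reps i ∈ PNstar p N) ∧
        (∀ i', i' < i → w 1 / reps i' ∉ PNstar p N) ∧
        (reps i * z (Sum.inr ()) = reps i * w 0 + e i * w 1)) := by
      intro z i w
      constructor
      · rintro ⟨⟨⟨⟨h1, h2⟩, h3⟩, h4⟩, h5⟩
        refine ⟨h1, h2, h3, fun i' hlt => ?_, ?_⟩
        · have := Set.mem_iInter.1 h4 i'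
          rw [if_pos hlt] at this
          exact this
        · have h5' := h5
          simp only [hEi, Set.mem_setOf_eq, MvPolynomial.eval_sub, MvPolynomial.eval_add,
            MvPolynomial.eval_mul, MvPolynomial.eval_C, MvPolynomial.eval_X, Sum.elim_inl,
            Sum.elim_inr, sub_sub, sub_eq_zero] at h5'
          exact h5'
      · rintro ⟨h1, h2, h3, h4, h5⟩
        refine ⟨⟨⟨⟨h1, h2⟩, h3⟩, Set.mem_iInter.2 fun i' => ?_⟩, ?_⟩
        · split
          · rename_i hlt
            exact h4 i' hlt
          · trivial
        · simp only [hEi, Set.mem_setOf_eq, MvPolynomial.eval_sub, MvPolynomial.eval_add,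
            MvPolynomial.eval_mul, MvPolynomial.eval_C, MvPolynomial.eval_X, Sum.elim_inl,
            Sum.elim_inr, sub_sub, sub_eq_zero]
          exact h5
    have hfact : ∀ (i : Fin R) (A B : ℚ_[p]), reps i * (A + B / reps i) = reps i * A + B := by
      intro i A B
      have := hreps i
      field_simp
    have hkey : {z : Fin m ⊕ Unit → ℚ_[p] | z ∘ Sum.inl ∈ X ∧ z (Sum.inr ()) = s (z ∘ Sum.inl)} =
        ⋃ i : Fin R, {z : Fin m ⊕ Unit → ℚ_[p] | ∃ w : Fin 2 → ℚ_[p], Sum.elim z w ∈ Ti i} := by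
      ext z
      simp only [Set.mem_setOf_eq, Set.mem_iUnion]
      constructor
      · rintro ⟨hxX, ht⟩
        obtain ⟨i₀, hi₀⟩ := hfX _ hxX
        have hne : (F (z ∘ Sum.inl)).Nonempty := ⟨i₀, (hmem_F _ i₀).2 hi₀⟩
        set j := (F (z ∘ Sum.inl)).min' hne with hj
        refine ⟨j, ![c (z ∘ Sum.inl), f (z ∘ Sum.inl)], (hTi_mem z j _).2 ⟨⟨hxX, rfl⟩, ⟨hxX, rfl⟩,
          ?_, ?_, ?_⟩⟩
        · exact (hmem_F _ j).1 ((F (z ∘ Sum.inl)).min'_mem hne)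
        · intro i' hlt hmem
          exact absurd (Finset.min'_le _ i' ((hmem_F _ i').2 hmem)) (not_le.2 hlt)
        · have hsx : s (z ∘ Sum.inl) =
              c (z ∘ Sum.inl) + e j * f (z ∘ Sum.inl) / reps j := by
            rw [hs_def]; simp only [dif_pos hne]; rfl
          rw [ht, hsx]
          exact hfact j _ _
      · rintro ⟨i, w, hw⟩
        obtain ⟨⟨hxX, hw0⟩, ⟨-, hw1⟩, h3, h4, h5⟩ := (hTi_mem z i w).1 hw
        rw [hw1] at h3 h4
        have hiF : i ∈ F (z ∘ Sum.inl) := (hmem_F _ i).2 h3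
        have hne : (F (z ∘ Sum.inl)).Nonempty := ⟨i, hiF⟩
        have hmin : (F (z ∘ Sum.inl)).min' hne = i := by
          refine le_antisymm (Finset.min'_le _ i hiF) ?_
          by_contra hcon
          push_neg at hcon
          exact h4 _ hcon ((hmem_F _ _).1 ((F (z ∘ Sum.inl)).min'_mem hne))
        refine ⟨hxX, ?_⟩
        have hsx : s (z ∘ Sum.inl) =
            c (z ∘ Sum.inl) + e i * f (z ∘ Sum.inl) / reps i := by
          rw [hs_def]; simp only [dif_pos hne, hmin]
        rw [hsx]
        have h5' := h5
        rw [hw0, hw1] at h5'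
        refine mul_left_cancel₀ (hreps i) ?_
        rw [hfact i _ _]
        exact h5'
    rw [hkey]
    exact LDef.iUnion L (fun i => LDef.exists_elim L (hTi_def i))



lemma norm_scaled (lam r fx : ℚ_[p]) (hlam : lam ≠ 0) (hr : r ≠ 0) (hfx : fx ≠ 0) (E : ℤ) :
    ‖lam * (p:ℚ_[p])^E * fx / r‖ = (p:ℝ) ^ (-(lam.valuation + E - r.valuation)) * ‖fx‖ := by
  have hp0 : (0:ℝ) < p := by exact_mod_cast (Fact.out : p.Prime).pos
  have hpne : (p:ℝ) ≠ 0 := hp0.ne'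
  rw [norm_div, norm_mul, norm_mul, Padic.norm_p_zpow,
    Padic.norm_eq_zpow_neg_valuation hlam, Padic.norm_eq_zpow_neg_valuation hr, div_eq_mul_inv, ← zpow_neg, neg_neg]
  rw [show -(lam.valuation + E - r.valuation) = -lam.valuation + -E + r.valuation by ring,
    zpow_add₀ hpne, zpow_add₀ hpne]
  ring

lemma defFunOn_one (L : Language) [L.Structure ℚ_[p] ] (φ : Language.ring →ᴸ L)
    [φ.IsExpansionOn ℚ_[p] ] {m : ℕ} (X : Set (Fin m → ℚ_[p])) (hX : LDef p L X) :
    DefFunOn p L X (fun _ => (1 : ℚ_[p])) := by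
  have h1 : LDef p L ((fun z : Fin m ⊕ Unit → ℚ_[p] => z ∘ Sum.inl) ⁻¹' X) :=
    LDef.preimage L Sum.inl hX
  have h2 : LDef p L {z : Fin m ⊕ Unit → ℚ_[p] |
      MvPolynomial.eval z (MvPolynomial.X (Sum.inr ()) - 1 :
        MvPolynomial (Fin m ⊕ Unit) ℚ_[p]) = 0} := LDef_poly L φ _
  have heq : {z : Fin m ⊕ Unit → ℚ_[p] | (z ∘ Sum.inl) ∈ X ∧ z (Sum.inr ()) = 1} =
      ((fun z : Fin m ⊕ Unit → ℚ_[p] => z ∘ Sum.inl) ⁻¹' X) ∩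
      {z : Fin m ⊕ Unit → ℚ_[p] | MvPolynomial.eval z (MvPolynomial.X (Sum.inr ()) - 1 :
        MvPolynomial (Fin m ⊕ Unit) ℚ_[p]) = 0} := by
    ext z
    simp [sub_eq_zero]
  show LDef p L _
  rw [heq]
  exact LDef.inter L h1 h2

/-- The main selector for a cell with a `fn`-boundary `f`:  a definable function
`s` with `s x - c x = lam * g`, `g` a nonzero `N`-th power, and
`‖s x - c x‖ = p^-(N * b d - d) * ‖f x‖` for some integer `d` (where `b : ℤ → ℤ` is
a rounding function chosen by the caller). -/
lemma cell_section_fn (L : Language) [L.Structure ℚ_[p] ] (φ : Language.ring →ᴸ L)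
    [φ.IsExpansionOn ℚ_[p] ] {m : ℕ} (N : ℕ) (hN : 1 ≤ N)
    (X : Set (Fin m → ℚ_[p])) (hX : LDef p L X)
    (c f : (Fin m → ℚ_[p]) → ℚ_[p]) (hc : DefFunOn p L X c) (hf : DefFunOn p L X f)
    (hf0 : ∀ x ∈ X, f x ≠ 0) (lam : ℚ_[p]) (hlam : lam ≠ 0) (b : ℤ → ℤ) :
    ∃ s : (Fin m → ℚ_[p]) → ℚ_[p],
      LDef p L {z : Fin m ⊕ Unit → ℚ_[p] | z ∘ Sum.inl ∈ X ∧ z (Sum.inr ()) = s (z ∘ Sum.inl)} ∧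
      ∀ x ∈ X, ∃ g ∈ PNstar p N, s x - c x = lam * g ∧
        ∃ d : ℤ, ‖s x - c x‖ = (p:ℝ) ^ (-((N:ℤ) * b d - d)) * ‖f x‖ := by
  obtain ⟨R, reps, hreps0, hrepsall⟩ := exists_reps (p := p) N hN
  set e : Fin R → ℚ_[p] := fun i =>
    lam * (p:ℚ_[p]) ^ ((N:ℤ) * b ((reps i).valuation - lam.valuation)) with he_def
  have hfX : ∀ x ∈ X, ∃ i, f x / reps i ∈ PNstar p N := by
    intro x hx
    obtain ⟨i, y, hy0, hy⟩ := hrepsall (f x) (hf0 x hx)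
    exact ⟨i, ⟨div_ne_zero (hf0 x hx) (hreps0 i), y, hy.symm ▸ rfl⟩⟩
  obtain ⟨s, hspec, hgraph⟩ := selector L φ X hX c f hc hf N R reps hreps0 e hfX
  refine ⟨s, hgraph, ?_⟩
  intro x hx
  obtain ⟨i, hi, hsx⟩ := hspec x hx
  obtain ⟨hine, y, hy⟩ := hi
  set d : ℤ := (reps i).valuation - lam.valuation with hd_def
  set E : ℤ := (N:ℤ) * b d with hE_def
  have hu : s x - c x = lam * (p:ℚ_[p]) ^ E * f x / reps i := by
    rw [hsx, he_def]; ring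
  refine ⟨(p:ℚ_[p]) ^ E * (f x / reps i), ⟨?_, ?_⟩, ?_, d, ?_⟩
  · exact mul_ne_zero (zpow_ne_zero _ padic_p_ne_zero) hine
  · refine ⟨(p:ℚ_[p]) ^ (b d) * y, ?_⟩
    rw [mul_pow, ← hy]
    congr 1
    rw [← zpow_natCast ((p:ℚ_[p]) ^ (b d)) N, ← zpow_mul, mul_comm (b d) (N:ℤ)]
  · rw [hu]; ring
  · rw [hu, norm_scaled lam (reps i) (f x) hlam (hreps0 i) (hf0 x hx) E]
    congr 2
    rw [hE_def, hd_def]; ring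



lemma pnstar_norm (N : ℕ) (hN : 1 ≤ N) {g : ℚ_[p]} (hg : g ∈ PNstar p N) :
    ∃ a : ℤ, ‖g‖ = (p:ℝ) ^ (-((N:ℤ) * a)) := by
  obtain ⟨h0, y, hy⟩ := hg
  have hy0 : y ≠ 0 := by
    rintro rfl
    rw [zero_pow (by omega)] at hy
    exact h0 hy.symm
  refine ⟨y.valuation, ?_⟩
  rw [← hy, norm_pow, Padic.norm_eq_zpow_neg_valuation hy0,
    ← zpow_natCast ((p:ℝ) ^ (-y.valuation)) N, ← zpow_mul]
  congr 1; ring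

lemma witness_le (N : ℕ) (hN : 1 ≤ N) (lam : ℚ_[p]) (hlam : lam ≠ 0)
    {g g₀ : ℚ_[p]} (hg : g ∈ PNstar p N) (hg₀ : g₀ ∈ PNstar p N)
    {B : ℝ} (h2 : ‖lam * g₀‖ ≤ B) (h3 : (p:ℝ) ^ (-(N:ℤ)) * B < ‖lam * g‖) :
    ‖lam * g₀‖ ≤ ‖lam * g‖ := by
  have hp1 : (1:ℝ) < p := padic_one_lt_p
  have hpne : (p:ℝ) ≠ 0 := by positivity
  by_contra hcon
  push_neg at hcon
  obtain ⟨a, ha⟩ := pnstar_norm N hN hg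
  obtain ⟨a₀, ha₀⟩ := pnstar_norm N hN hg₀
  have hng : ‖lam * g‖ = (p:ℝ) ^ (-(lam.valuation + (N:ℤ) * a)) := by
    rw [norm_mul, ha, Padic.norm_eq_zpow_neg_valuation hlam, ← zpow_add₀ hpne]
    congr 1; ring
  have hng₀ : ‖lam * g₀‖ = (p:ℝ) ^ (-(lam.valuation + (N:ℤ) * a₀)) := by
    rw [norm_mul, ha₀, Padic.norm_eq_zpow_neg_valuation hlam, ← zpow_add₀ hpne]
    congr 1; ring
  rw [hng, hng₀] at hcon
  have haa : a₀ < a := by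
    have := (zpow_lt_zpow_iff_right₀ hp1).1 hcon
    have hNpos : (0:ℤ) < N := by exact_mod_cast hN
    nlinarith
  have hle : ‖lam * g‖ ≤ (p:ℝ) ^ (-(N:ℤ)) * ‖lam * g₀‖ := by
    rw [hng, hng₀, ← zpow_add₀ hpne]
    refine (zpow_le_zpow_iff_right₀ hp1).2 ?_
    have hNpos : (0:ℤ) < N := by exact_mod_cast hN
    nlinarith
  have hBpos : (0:ℝ) ≤ (p:ℝ) ^ (-(N:ℤ)) := by positivity
  have : ‖lam * g‖ ≤ (p:ℝ) ^ (-(N:ℤ)) * B :=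
    hle.trans (mul_le_mul_of_nonneg_left h2 hBpos)
  linarith

lemma cell_section (L : Language) [L.Structure ℚ_[p] ] (φ : Language.ring →ᴸ L)
    [φ.IsExpansionOn ℚ_[p] ] {m : ℕ} (N : ℕ) (hN : 1 ≤ N)
    (H : PCell p L m (PNstar p N)) :
    ∃ s : (Fin m → ℚ_[p]) → ℚ_[p],
      LDef p L {z : Fin m ⊕ Unit → ℚ_[p] |
        z ∘ Sum.inl ∈ H.base ∧ z (Sum.inr ()) = s (z ∘ Sum.inl)} ∧
      ∀ x ∈ H.base, Sum.elim x (fun _ => s x) ∈ H.toSet := by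
  have hp1 : (1:ℝ) < p := padic_one_lt_p
  have hNne : ((N:ℤ)) ≠ 0 := by exact_mod_cast (by omega : N ≠ 0)
  have hNpos : (0:ℤ) < N := by exact_mod_cast hN
  by_cases hlam : H.lam = 0
  · rcases hnu : H.ν with _ | _ | fν
    · refine ⟨H.c, H.c_def, ?_⟩
      intro x hx
      simp only [PCell.toSet, Set.mem_setOf_eq, Sum.elim_comp_inl, Sum.elim_inr]
      refine ⟨hx, ?_, ?_, 1, ⟨one_ne_zero, 1, one_pow N⟩, by rw [hlam]; simp⟩
      · rw [hnu]; simp [CBound.val]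
      · simp
    · exfalso
      obtain ⟨x, hx⟩ := H.base_nonempty
      obtain ⟨t, h1, -, -⟩ := H.fiber_nonempty x hx
      rw [hnu] at h1
      simp only [CBound.val, top_le_iff] at h1
      exact ENNReal.coe_ne_top h1
    · exfalso
      obtain ⟨x, hx⟩ := H.base_nonempty
      obtain ⟨t, h1, -, g, hg, hgeq⟩ := H.fiber_nonempty x hx
      rw [hlam, zero_mul] at hgeq
      rw [hnu] at h1
      have hwf := H.ν_wf
      rw [hnu] at hwf
      obtain ⟨h0, -⟩ := hwf
      rw [hgeq] at h1
      simp only [CBound.val, nnnorm_zero, ENNReal.coe_zero, nonpos_iff_eq_zero,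
        ENNReal.coe_eq_zero, nnnorm_eq_zero] at h1
      exact h0 x hx h1
  · rcases hmu : H.μ with _ | _ | fμ
    · -- μ = 0 impossible for type 1
      exfalso
      obtain ⟨x, hx⟩ := H.base_nonempty
      obtain ⟨t, -, h2, g, hg, hgeq⟩ := H.fiber_nonempty x hx
      rw [hmu] at h2
      simp only [CBound.val, nonpos_iff_eq_zero, ENNReal.coe_eq_zero, nnnorm_eq_zero] at h2
      rw [h2] at hgeq
      exact (mul_ne_zero hlam hg.1) hgeq.symm
    · rcases hnu : H.ν with _ | _ | fν
      · -- ν = 0, μ = ∞ : s = c + lam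
        have hone : DefFunOn p L H.base (fun _ => (1:ℚ_[p])) := defFunOn_one L φ _ H.base_def
        obtain ⟨s, hspec, hgraph⟩ := selector L φ H.base H.base_def H.c (fun _ => 1) H.c_def
          hone N 1 (fun _ => 1) (fun _ => one_ne_zero) (fun _ => H.lam)
          (fun x _ => ⟨0, by
            have h11 : (1:ℚ_[p]) / 1 = 1 := by norm_num
            rw [h11]
            exact ⟨one_ne_zero, 1, one_pow N⟩⟩)
        refine ⟨s, hgraph, ?_⟩
        intro x hx
        obtain ⟨i, -, hsx⟩ := hspec x hx
        have hsx' : s x = H.c x + H.lam := by rw [hsx]; field_simp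
        simp only [PCell.toSet, Set.mem_setOf_eq, Sum.elim_comp_inl, Sum.elim_inr]
        refine ⟨hx, ?_, ?_, 1, ⟨one_ne_zero, 1, one_pow N⟩, by rw [hsx']; ring⟩
        · rw [hnu]; simp [CBound.val]
        · rw [hmu]; simp [CBound.val]
      · exfalso
        obtain ⟨x, hx⟩ := H.base_nonempty
        obtain ⟨t, h1, -, -⟩ := H.fiber_nonempty x hx
        rw [hnu] at h1
        simp only [CBound.val, top_le_iff] at h1
        exact ENNReal.coe_ne_top h1
      · -- ν = fn fν, μ = ∞
        have hwf := H.ν_wf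
        rw [hnu] at hwf
        obtain ⟨hν0, hνdef⟩ := hwf
        obtain ⟨s, hgraph, hsem⟩ := cell_section_fn L φ N hN H.base H.base_def H.c fν
          H.c_def hνdef hν0 H.lam hlam (fun d => d / N)
        refine ⟨s, hgraph, ?_⟩
        intro x hx
        obtain ⟨g, hg, hueq, d, hnorm⟩ := hsem x hx
        have hr0 : -(N:ℤ) < (N:ℤ) * (d / N) - d ∧ (N:ℤ) * (d / N) - d ≤ 0 := by
          have h1 := Int.emod_nonneg d hNne
          have h2 := Int.emod_lt_of_pos d hNpos
          have h3 := Int.mul_ediv_add_emod d (N:ℤ)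
          omega
        simp only [PCell.toSet, Set.mem_setOf_eq, Sum.elim_comp_inl, Sum.elim_inr]
        refine ⟨hx, ?_, ?_, g, hg, hueq⟩
        · rw [hnu]
          simp only [CBound.val, ENNReal.coe_le_coe, ← NNReal.coe_le_coe, coe_nnnorm]
          rw [hnorm]
          have h1 : (1:ℝ) ≤ (p:ℝ) ^ (-((N:ℤ) * (d / N) - d)) := by
            rw [show (1:ℝ) = (p:ℝ) ^ (0:ℤ) by simp]
            exact (zpow_le_zpow_iff_right₀ hp1).2 (by omega)
          nlinarith [norm_nonneg (fν x)]
        · rw [hmu]; simp [CBound.val]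
    · -- μ = fn fμ
      have hwf := H.μ_wf
      rw [hmu] at hwf
      obtain ⟨hμ0, hμdef⟩ := hwf
      obtain ⟨s, hgraph, hsem⟩ := cell_section_fn L φ N hN H.base H.base_def H.c fμ
        H.c_def hμdef hμ0 H.lam hlam (fun d => -((-d) / N))
      refine ⟨s, hgraph, ?_⟩
      intro x hx
      obtain ⟨g, hg, hueq, d, hnorm⟩ := hsem x hx
      have hr0 : 0 ≤ (N:ℤ) * (-((-d) / N)) - d ∧ (N:ℤ) * (-((-d) / N)) - d < N := by
        have h1 := Int.emod_nonneg (-d) hNne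
        have h2 := Int.emod_lt_of_pos (-d) hNpos
        have h3 := Int.mul_ediv_add_emod (-d) (N:ℤ)
        have h4 : (N:ℤ) * (-((-d) / N)) = -((N:ℤ) * ((-d)/N)) := by ring
        omega
      have hμpos : (0:ℝ) < ‖fμ x‖ := norm_pos_iff.2 (hμ0 x hx)
      have hupper : ‖s x - H.c x‖ ≤ ‖fμ x‖ := by
        rw [hnorm]
        have h1 : (p:ℝ) ^ (-((N:ℤ) * (-((-d) / N)) - d)) ≤ 1 := by
          rw [show (1:ℝ) = (p:ℝ) ^ (0:ℤ) by simp]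
          exact (zpow_le_zpow_iff_right₀ hp1).2 (by omega)
        nlinarith
      have hlower2 : (p:ℝ) ^ (-(N:ℤ)) * ‖fμ x‖ < ‖s x - H.c x‖ := by
        rw [hnorm]
        have h1 : (p:ℝ) ^ (-(N:ℤ)) < (p:ℝ) ^ (-((N:ℤ) * (-((-d) / N)) - d)) := by
          exact (zpow_lt_zpow_iff_right₀ hp1).2 (by omega)
        nlinarith
      simp only [PCell.toSet, Set.mem_setOf_eq, Sum.elim_comp_inl, Sum.elim_inr]
      refine ⟨hx, ?_, ?_, g, hg, hueq⟩
      · rcases hnu : H.ν with _ | _ | fν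
        · simp [CBound.val]
        · exfalso
          obtain ⟨t, h1, -, -⟩ := H.fiber_nonempty x hx
          rw [hnu] at h1
          simp only [CBound.val, top_le_iff] at h1
          exact ENNReal.coe_ne_top h1
        · obtain ⟨t₀, h1, h2, g₀, hg₀, hgeq₀⟩ := H.fiber_nonempty x hx
          rw [hnu] at h1
          rw [hmu] at h2
          simp only [CBound.val, ENNReal.coe_le_coe, ← NNReal.coe_le_coe, coe_nnnorm] at h1 h2 ⊢
          have h2' : ‖H.lam * g₀‖ ≤ ‖fμ x‖ := by rw [← hgeq₀]; exact h2
          have h3' : (p:ℝ) ^ (-(N:ℤ)) * ‖fμ x‖ < ‖H.lam * g‖ := by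
            rw [← hueq]; exact hlower2
          have := witness_le N hN H.lam hlam hg hg₀ h2' h3'
          calc ‖fν x‖ ≤ ‖t₀ - H.c x‖ := h1
            _ = ‖H.lam * g₀‖ := by rw [hgeq₀]
            _ ≤ ‖H.lam * g‖ := this
            _ = ‖s x - H.c x‖ := by rw [← hueq]
      · rw [hmu]
        simp only [CBound.val, ENNReal.coe_le_coe, ← NNReal.coe_le_coe, coe_nnnorm]
        exact hupper


lemma core (L : Language) [L.Structure ℚ_[p] ] (φ : Language.ring →ᴸ L)
    [φ.IsExpansionOn ℚ_[p] ]
    (hcd : ∀ (m : ℕ) (I : Type) [Fintype I] (A : I → Set (Fin m ⊕ Unit → ℚ_[p])),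
      (∀ i, LDef p L (A i)) →
      ∃ N : ℕ, 1 ≤ N ∧
        ∃ (k : ℕ) (H : Fin k → PCell p L m (PNstar p N)),
          (∀ j j' : Fin k, j ≠ j' → Disjoint (H j).toSet (H j').toSet) ∧
          (⋃ j, (H j).toSet) = ⋃ i, A i ∧
          ∀ (i : I) (j : Fin k), ((H j).toSet ∩ A i).Nonempty → (H j).toSet ⊆ A i)
    (m : ℕ) (S : Set (Fin m ⊕ Unit → ℚ_[p])) (hS : LDef p L S) :
    ∃ τ : (Fin m → ℚ_[p]) → ℚ_[p],
      LDef p L {z : Fin m ⊕ Unit → ℚ_[p] |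
        (∃ t : ℚ_[p], Sum.elim (z ∘ Sum.inl) (fun _ => t) ∈ S) ∧
        z (Sum.inr ()) = τ (z ∘ Sum.inl)} ∧
      ∀ x : Fin m → ℚ_[p], (∃ t : ℚ_[p], Sum.elim x (fun _ => t) ∈ S) →
        Sum.elim x (fun _ => τ x) ∈ S := by
  classical
  obtain ⟨N, hN, k, H, hdisj, hunion, href⟩ := hcd m Unit (fun _ => S) (fun _ => hS)
  have hU : (⋃ j, (H j).toSet) = S := by rw [hunion, Set.iUnion_const]
  have hsub : ∀ j, (H j).toSet ⊆ S := fun j => hU ▸ Set.subset_iUnion (fun j => (H j).toSet) j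
  choose s hgraph hmem using fun j => cell_section L φ N hN (H j)
  set F : (Fin m → ℚ_[p]) → Finset (Fin k) :=
    fun x => Finset.univ.filter (fun j => x ∈ (H j).base) with hF_def
  have hmem_F : ∀ x j, j ∈ F x ↔ x ∈ (H j).base := by intro x j; simp [hF_def]
  set τ : (Fin m → ℚ_[p]) → ℚ_[p] := fun x =>
    if h : (F x).Nonempty then s ((F x).min' h) x else 0 with hτ_def
  have hK1 : ∀ x : Fin m → ℚ_[p],
      (∃ t : ℚ_[p], Sum.elim x (fun _ => t) ∈ S) ↔ (F x).Nonempty := by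
    intro x
    constructor
    · rintro ⟨t, ht⟩
      rw [← hU] at ht
      obtain ⟨j, hj⟩ := Set.mem_iUnion.1 ht
      have hbase := hj.1
      rw [Sum.elim_comp_inl] at hbase
      exact ⟨j, (hmem_F x j).2 hbase⟩
    · rintro ⟨j, hj⟩
      exact ⟨s j x, hsub j (hmem j x ((hmem_F x j).1 hj))⟩
  have hK2 : ∀ x : Fin m → ℚ_[p], (∃ t : ℚ_[p], Sum.elim x (fun _ => t) ∈ S) →
      Sum.elim x (fun _ => τ x) ∈ S := by
    intro x hx
    have hne : (F x).Nonempty := (hK1 x).1 hx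
    have hτx : τ x = s ((F x).min' hne) x := by rw [hτ_def]; simp only [dif_pos hne]
    rw [hτx]
    exact hsub _ (hmem _ x ((hmem_F x _).1 ((F x).min'_mem hne)))
  refine ⟨τ, ?_, hK2⟩
  set B : Fin k → Set (Fin m ⊕ Unit → ℚ_[p]) := fun j =>
    ((fun z : Fin m ⊕ Unit → ℚ_[p] => z ∘ Sum.inl) ⁻¹'
      ((H j).base ∩ ⋂ j', if j' < j then ((H j').base)ᶜ else Set.univ)) ∩
    {z | z ∘ Sum.inl ∈ (H j).base ∧ z (Sum.inr ()) = s j (z ∘ Sum.inl)} with hB_def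
  have hBdef : ∀ j, LDef p L (B j) := by
    intro j
    refine LDef.inter L (LDef.preimage L Sum.inl (LDef.inter L (H j).base_def
      (LDef.iInter L (fun j' => ?_)))) (hgraph j)
    split
    · exact LDef.compl L (H j').base_def
    · exact Set.definable_univ
  have hkey : {z : Fin m ⊕ Unit → ℚ_[p] |
      (∃ t : ℚ_[p], Sum.elim (z ∘ Sum.inl) (fun _ => t) ∈ S) ∧
      z (Sum.inr ()) = τ (z ∘ Sum.inl)} = ⋃ j, B j := by
    ext z
    set x := z ∘ Sum.inl with hx_def
    simp only [Set.mem_setOf_eq, Set.mem_iUnion]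
    constructor
    · rintro ⟨hex, ht⟩
      have hne : (F x).Nonempty := (hK1 x).1 hex
      set j₀ := (F x).min' hne with hj₀
      refine ⟨j₀, ⟨Set.mem_inter ((hmem_F x j₀).1 ((F x).min'_mem hne))
        (Set.mem_iInter.2 fun j' => ?_), ?_, ?_⟩⟩
      · split
        · rename_i hlt
          intro hmem'
          exact absurd (Finset.min'_le _ j' ((hmem_F x j').2 hmem')) (not_le.2 hlt)
        · trivial
      · exact (hmem_F x j₀).1 ((F x).min'_mem hne)
      · rw [ht, hτ_def]; exact dif_pos hne
    · rintro ⟨j, ⟨hpre, hbase, ht⟩⟩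
      have hx1 : x ∈ (H j).base := hbase
      have hmin' : ∀ j' , j' < j → x ∉ (H j').base := by
        intro j' hlt
        have := Set.mem_iInter.1 hpre.2 j'
        rw [if_pos hlt] at this
        exact this
      have hjF : j ∈ F x := (hmem_F x j).2 hx1
      have hne : (F x).Nonempty := ⟨j, hjF⟩
      have hminj : (F x).min' hne = j := by
        refine le_antisymm (Finset.min'_le _ j hjF) ?_
        by_contra hcon
        push_neg at hcon
        exact hmin' _ hcon ((hmem_F x _).1 ((F x).min'_mem hne))
      refine ⟨(hK1 x).2 hne, ?_⟩
      rw [hτ_def]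
      simp only [dif_pos hne, hminj]
      exact ht.trans (by rw [← hminj]; exact (dif_pos (t := fun h => s ((F (z ∘ Sum.inl)).min' h) (z ∘ Sum.inl)) (e := fun _ => 0) hne).symm)
  rw [hkey]
  exact LDef.iUnion L hBdef


lemma sum_elim_eta {γ δ : Type} (z : γ ⊕ δ → ℚ_[p]) :
    Sum.elim (z ∘ Sum.inl) (z ∘ Sum.inr) = z :=
  funext fun a => by cases a <;> rfl

lemma snoc_eta {n : ℕ} (y : Fin (n+1) → ℚ_[p]) :
    Fin.snoc (y ∘ Fin.castSucc) (y (Fin.last n)) = y := by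
  funext j
  refine Fin.lastCases ?_ (fun b => ?_) j
  · simp
  · simp [Fin.snoc_castSucc]

theorem main_skolem (L : Language) [L.Structure ℚ_[p] ] (φ : Language.ring →ᴸ L)
    [φ.IsExpansionOn ℚ_[p] ]
    (hcd : ∀ (m : ℕ) (I : Type) [Fintype I] (A : I → Set (Fin m ⊕ Unit → ℚ_[p])),
      (∀ i, LDef p L (A i)) →
      ∃ N : ℕ, 1 ≤ N ∧
        ∃ (k : ℕ) (H : Fin k → PCell p L m (PNstar p N)),
          (∀ j j' : Fin k, j ≠ j' → Disjoint (H j).toSet (H j').toSet) ∧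
          (⋃ j, (H j).toSet) = ⋃ i, A i ∧
          ∀ (i : I) (j : Fin k), ((H j).toSet ∩ A i).Nonempty → (H j).toSet ⊆ A i) :
    HasDefSkolem p L := by
  intro m n
  induction n with
  | zero =>
    intro S hS
    refine ⟨fun _ => (fun i => i.elim0), ?_, ?_⟩
    · have heq : {z : Fin m ⊕ Fin 0 → ℚ_[p] |
          (∃ y : Fin 0 → ℚ_[p], Sum.elim (z ∘ Sum.inl) y ∈ S) ∧
          (z ∘ Sum.inr) = (fun i => i.elim0)} = S := by
        ext z
        simp only [Set.mem_setOf_eq]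
        constructor
        · rintro ⟨⟨y, hy⟩, -⟩
          have : Sum.elim (z ∘ Sum.inl) y = z := by
            funext a
            cases a with
            | inl i => rfl
            | inr b => exact b.elim0
          rwa [this] at hy
        · intro hz
          refine ⟨⟨z ∘ Sum.inr, by rwa [sum_elim_eta]⟩, ?_⟩
          funext b
          exact b.elim0
      rw [heq]
      exact hS
    · rintro x ⟨y, hy⟩
      have : Sum.elim x (fun i : Fin 0 => i.elim0) = Sum.elim x y := by
        funext a
        cases a with
        | inl i => rfl
        | inr b => exact b.elim0
      rwa [this]
  | succ n ih =>
    intro S hS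
    -- the reindexing maps
    set g₃ : Fin m ⊕ Fin (n+1) → Fin (m+n) ⊕ Unit := fun a =>
      Sum.rec (fun i => Sum.inl (finSumFinEquiv (Sum.inl i)))
        (fun j => Fin.lastCases (Sum.inr ())
          (fun b => Sum.inl (finSumFinEquiv (Sum.inr b))) j) a with hg₃
    set emb : Fin m ⊕ Fin n → Fin m ⊕ Fin (n+1) := Sum.map id Fin.castSucc with hemb
    set g₂ : Fin (m+n) ⊕ Unit → Fin m ⊕ Fin (n+1) :=
      Sum.elim (fun w => Sum.map id Fin.castSucc (finSumFinEquiv.symm w))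
        (fun _ => Sum.inr (Fin.last n)) with hg₂
    set W : (Fin m → ℚ_[p]) → (Fin n → ℚ_[p]) → (Fin (m+n) → ℚ_[p]) :=
      fun x y' => Sum.elim x y' ∘ finSumFinEquiv.symm with hW
    set T₁ : Set (Fin (m+n) ⊕ Unit → ℚ_[p]) :=
      (fun u : Fin (m+n) ⊕ Unit → ℚ_[p] => u ∘ g₃) ⁻¹' S with hT₁
    have hT₁def : LDef p L T₁ := LDef.preimage L g₃ hS
    -- key computation
    have hKC : ∀ (x : Fin m → ℚ_[p]) (y' : Fin n → ℚ_[p]) (t : ℚ_[p]),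
        (Sum.elim (W x y') (fun _ => t)) ∘ g₃ = Sum.elim x (Fin.snoc y' t) := by
      intro x y' t
      funext a
      cases a with
      | inl i =>
        simp only [hg₃, hW, Function.comp_apply, Sum.elim_inl, Sum.elim_inr,
          Equiv.symm_apply_apply]
      | inr j =>
        refine Fin.lastCases ?_ (fun b => ?_) j
        · simp only [hg₃, hW, Function.comp_apply, Fin.lastCases_last, Fin.snoc_last,
            Sum.elim_inl, Sum.elim_inr]
        · simp only [hg₃, hW, Function.comp_apply, Fin.lastCases_castSucc, Fin.snoc_castSucc,
            Sum.elim_inl, Sum.elim_inr, Equiv.symm_apply_apply]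
    have hT₁mem : ∀ (x : Fin m → ℚ_[p]) (y' : Fin n → ℚ_[p]) (t : ℚ_[p]),
        Sum.elim (W x y') (fun _ => t) ∈ T₁ ↔ Sum.elim x (Fin.snoc y' t) ∈ S := by
      intro x y' t
      rw [hT₁, Set.mem_preimage, hKC]
    obtain ⟨τ, hGτdef, hτsect⟩ := core L φ hcd (m+n) T₁ hT₁def
    -- the set S'
    set S' : Set (Fin m ⊕ Fin n → ℚ_[p]) := {v : Fin m ⊕ Fin n → ℚ_[p] |
      ∃ t : ℚ_[p], Sum.elim (v ∘ Sum.inl) (Fin.snoc (v ∘ Sum.inr) t) ∈ S} with hS'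
    have hS'def : LDef p L S' := by
      have himg := Set.Definable.image_comp hS emb
      have heq : ((fun g : Fin m ⊕ Fin (n+1) → ℚ_[p] => g ∘ emb) '' S) = S' := by
        ext v
        constructor
        · rintro ⟨z, hz, rfl⟩
          refine ⟨z (Sum.inr (Fin.last n)), ?_⟩
          have : Sum.elim ((z ∘ emb) ∘ Sum.inl) (Fin.snoc ((z ∘ emb) ∘ Sum.inr)
              (z (Sum.inr (Fin.last n)))) = z := by
            funext a
            cases a with
            | inl i => rfl
            | inr j =>
              refine Fin.lastCases ?_ (fun b => ?_) j
              · simp only [Sum.elim_inr, Fin.snoc_last]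
              · simp only [Sum.elim_inr, Fin.snoc_castSucc]
                rfl
          rwa [this]
        · rintro ⟨t, ht⟩
          refine ⟨Sum.elim (v ∘ Sum.inl) (Fin.snoc (v ∘ Sum.inr) t), ht, ?_⟩
          funext a
          cases a with
          | inl i => rfl
          | inr b =>
            simp only [hemb, Function.comp_apply, Sum.map_inr, Sum.elim_inr, Fin.snoc_castSucc]
      rwa [heq] at himg
    obtain ⟨σ', hG'def, hσ'sect⟩ := ih S' hS'def
    set σ : (Fin m → ℚ_[p]) → (Fin (n+1) → ℚ_[p]) :=
      fun x => Fin.snoc (σ' x) (τ (W x (σ' x))) with hσ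
    refine ⟨σ, ?_, ?_⟩
    · -- definability of the graph
      set D₁ : Set (Fin m ⊕ Fin (n+1) → ℚ_[p]) :=
        (fun z : Fin m ⊕ Fin (n+1) → ℚ_[p] => z ∘ emb) ⁻¹'
          {v : Fin m ⊕ Fin n → ℚ_[p] |
            (∃ y : Fin n → ℚ_[p], Sum.elim (v ∘ Sum.inl) y ∈ S') ∧
            (v ∘ Sum.inr) = σ' (v ∘ Sum.inl)} with hD₁
      set D₂ : Set (Fin m ⊕ Fin (n+1) → ℚ_[p]) :=
        (fun z : Fin m ⊕ Fin (n+1) → ℚ_[p] => z ∘ g₂) ⁻¹'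
          {u : Fin (m+n) ⊕ Unit → ℚ_[p] |
            (∃ t : ℚ_[p], Sum.elim (u ∘ Sum.inl) (fun _ => t) ∈ T₁) ∧
            u (Sum.inr ()) = τ (u ∘ Sum.inl)} with hD₂
      have hD₁def : LDef p L D₁ := LDef.preimage L emb hG'def
      have hD₂def : LDef p L D₂ := LDef.preimage L g₂ hGτdef
      -- computations about the reindexings
      have hC1a : ∀ z : Fin m ⊕ Fin (n+1) → ℚ_[p], (z ∘ emb) ∘ Sum.inl = z ∘ Sum.inl :=
        fun z => funext fun i => rfl
      have hC1b : ∀ z : Fin m ⊕ Fin (n+1) → ℚ_[p],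
          (z ∘ emb) ∘ Sum.inr = (z ∘ Sum.inr) ∘ Fin.castSucc :=
        fun z => funext fun b => rfl
      have hC2 : ∀ z : Fin m ⊕ Fin (n+1) → ℚ_[p],
          (z ∘ g₂) ∘ Sum.inl = W (z ∘ Sum.inl) ((z ∘ Sum.inr) ∘ Fin.castSucc) := by
        intro z
        funext w
        show z (Sum.map id Fin.castSucc (finSumFinEquiv.symm w)) =
          Sum.elim (z ∘ Sum.inl) ((z ∘ Sum.inr) ∘ Fin.castSucc) (finSumFinEquiv.symm w)
        cases h : finSumFinEquiv.symm w with
        | inl i => rfl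
        | inr b => rfl
      have hC3 : ∀ z : Fin m ⊕ Fin (n+1) → ℚ_[p],
          (z ∘ g₂) (Sum.inr ()) = z (Sum.inr (Fin.last n)) := fun z => rfl
      have hkey : {z : Fin m ⊕ Fin (n+1) → ℚ_[p] |
          (∃ y : Fin (n+1) → ℚ_[p], Sum.elim (z ∘ Sum.inl) y ∈ S) ∧
          (z ∘ Sum.inr) = σ (z ∘ Sum.inl)} = D₁ ∩ D₂ := by
        ext z
        simp only [Set.mem_setOf_eq, Set.mem_inter_iff, hD₁, hD₂, Set.mem_preimage,
          hC1a, hC1b, hC2, hC3]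
        constructor
        · rintro ⟨⟨yy, hyy⟩, hσz⟩
          have hcs : (z ∘ Sum.inr) ∘ Fin.castSucc = σ' (z ∘ Sum.inl) := by
            funext b
            have hb : (z ∘ Sum.inr) (Fin.castSucc b) = σ (z ∘ Sum.inl) (Fin.castSucc b) := by
              rw [hσz]
            rw [hσ] at hb
            simpa [Fin.snoc_castSucc] using hb
          have hlast : z (Sum.inr (Fin.last n)) = τ (W (z ∘ Sum.inl) (σ' (z ∘ Sum.inl))) := by
            have : (z ∘ Sum.inr) (Fin.last n) = σ (z ∘ Sum.inl) (Fin.last n) := by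
              rw [hσz]
            rw [hσ] at this
            simpa [Fin.snoc_last] using this
          constructor
          · constructor
            · refine ⟨yy ∘ Fin.castSucc, ?_⟩
              show ∃ t, Sum.elim ((Sum.elim (z ∘ Sum.inl) (yy ∘ Fin.castSucc)) ∘ Sum.inl)
                (Fin.snoc ((Sum.elim (z ∘ Sum.inl) (yy ∘ Fin.castSucc)) ∘ Sum.inr) t) ∈ S
              rw [Sum.elim_comp_inl, Sum.elim_comp_inr]
              refine ⟨yy (Fin.last n), ?_⟩
              rwa [snoc_eta yy]
            · exact hcs
          · constructor
            · -- there exists t with the T₁-membership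
              have hxdom : ∃ y : Fin n → ℚ_[p], Sum.elim (z ∘ Sum.inl) y ∈ S' := by
                refine ⟨yy ∘ Fin.castSucc, ?_⟩
                show ∃ t, Sum.elim _ (Fin.snoc _ t) ∈ S
                rw [Sum.elim_comp_inl, Sum.elim_comp_inr]
                exact ⟨yy (Fin.last n), by rwa [snoc_eta yy]⟩
              have hmemS' := hσ'sect (z ∘ Sum.inl) hxdom
              rw [hS'] at hmemS'
              obtain ⟨t, ht⟩ := hmemS'
              rw [Sum.elim_comp_inl, Sum.elim_comp_inr] at ht
              refine ⟨t, ?_⟩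
              rw [hcs]
              exact (hT₁mem _ _ t).2 ht
            · rw [hcs, hlast]
        · rintro ⟨⟨⟨y'', hy''⟩, hcs⟩, ⟨-, hlast⟩⟩
          constructor
          · rw [hS'] at hy''
            obtain ⟨t, ht⟩ := hy''
            rw [Sum.elim_comp_inl, Sum.elim_comp_inr] at ht
            exact ⟨Fin.snoc y'' t, ht⟩
          · funext j
            refine Fin.lastCases ?_ (fun b => ?_) j
            · simp only [hσ, Fin.snoc_last]
              rw [← hcs]
              exact hlast
            · simp only [hσ, Fin.snoc_castSucc]
              exact congrFun hcs b
      rw [hkey]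
      exact LDef.inter L hD₁def hD₂def
    · -- the section property
      rintro x ⟨y, hy⟩
      have hxdom : ∃ y' : Fin n → ℚ_[p], Sum.elim x y' ∈ S' := by
        refine ⟨y ∘ Fin.castSucc, ?_⟩
        show ∃ t, Sum.elim _ (Fin.snoc _ t) ∈ S
        rw [Sum.elim_comp_inl, Sum.elim_comp_inr]
        exact ⟨y (Fin.last n), by rwa [snoc_eta y]⟩
      have hmemS' := hσ'sect x hxdom
      rw [hS'] at hmemS'
      obtain ⟨t, ht⟩ := hmemS'
      rw [Sum.elim_comp_inl, Sum.elim_comp_inr] at ht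
      have hT : ∃ t, Sum.elim (W x (σ' x)) (fun _ => t) ∈ T₁ :=
        ⟨t, (hT₁mem x (σ' x) t).2 ht⟩
      have := hτsect (W x (σ' x)) hT
      have hfin := (hT₁mem x (σ' x) (τ (W x (σ' x)))).1 this
      rw [hσ]
      exact hfin


end Aux

/-- If Denef's cell decomposition holds in `(ℚ_p, ℒ)` — every finite
family of definable subsets of `ℚ_p^{m+1}` is refined, for some `N ≥ 1`, by a finite
family of presented cells mod `P_N^*` — then `(ℚ_p, ℒ)` has definable Skolem functions. -/
theorem hasDefSkolem_of_cell_decomposition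
    (L : Language) [L.Structure ℚ_[p] ]
    (φ : Language.ring →ᴸ L) [φ.IsExpansionOn ℚ_[p] ]
    (hcd : ∀ (m : ℕ) (I : Type) [Fintype I] (A : I → Set (Fin m ⊕ Unit → ℚ_[p])),
      (∀ i, LDef p L (A i)) →
      ∃ N : ℕ, 1 ≤ N ∧
        ∃ (k : ℕ) (H : Fin k → PCell p L m (PNstar p N)),
          (∀ j j' : Fin k, j ≠ j' → Disjoint (H j).toSet (H j').toSet) ∧
          (⋃ j, (H j).toSet) = ⋃ i, A i ∧
          ∀ (i : I) (j : Fin k), ((H j).toSet ∩ A i).Nonempty → (H j).toSet ⊆ A i) :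
    HasDefSkolem p L :=
  main_skolem L φ hcd

end PadicMin
end
end
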